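/- arXiv:1904.02031 — 8 statements merged into one kernel-verified Lean document; each statement's English description precedes it below -/
import Mathlib

section
/- Let S be a real symmetric positive semidefinite b×b matrix (b ≥ 3) with row sums zero whose kernel is exactly the constant vectors, and let λ₂ be its second-smallest eigenvalue. Then the matrix S' = S - λ₂·I_b + (λ₂/b)·J_b has rank at most b - 2, and there exists a real b×(b-2) matrix W with W·W^T = S' and W^T·e = 0. -/
open Matrix

lemma psd_factor {b r : ℕ} (A : Matrix (Fin b) (Fin b) ℝ) (hA : A.PosSemidef)
    (hr : A.rank ≤ r) : ∃ W : Matrix (Fin b) (Fin r) ℝ, W * Wᵀ = A := by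
  classical
  have hH : A.IsHermitian := hA.1
  have hcard : Fintype.card {i // hH.eigenvalues i ≠ 0} ≤ Fintype.card (Fin r) := by
    rw [← hH.rank_eq_card_non_zero_eigs]; simpa using hr
  obtain ⟨f⟩ := Function.Embedding.nonempty_of_card_le hcard
  set μ := hH.eigenvalues with hμ
  set E : Matrix (Fin b) (Fin r) ℝ := Matrix.of fun i j =>
    if h : μ i ≠ 0 then (if f ⟨i, h⟩ = j then Real.sqrt (μ i) else 0) else 0 with hE
  have hEE : E * Eᵀ = Matrix.diagonal μ := by
    ext i k
    simp only [mul_apply, transpose_apply, hE, Matrix.of_apply, diagonal_apply]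
    by_cases hik : i = k
    · subst hik
      simp only [if_pos rfl]
      by_cases hi : μ i ≠ 0
      · simp only [dif_pos hi]
        rw [Finset.sum_eq_single (f ⟨i, hi⟩)]
        · simp [Real.mul_self_sqrt (hA.eigenvalues_nonneg i)]
          exact Real.mul_self_sqrt (hA.eigenvalues_nonneg i)
        · intro j _ hj
          rw [if_neg (fun h => hj h.symm), zero_mul]
        · simp
      · push_neg at hi
        simp [hi]
    · rw [if_neg hik, Finset.sum_eq_zero]
      intro j _
      by_cases hi : μ i ≠ 0
      · by_cases hk : μ k ≠ 0
        · simp only [dif_pos hi, dif_pos hk]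
          by_cases h1 : f ⟨i, hi⟩ = j
          · have h2 : f ⟨k, hk⟩ ≠ j := by
              intro h2
              exact hik (congrArg Subtype.val (f.injective (h1.trans h2.symm)))
            rw [if_neg h2, mul_zero]
          · rw [if_neg h1, zero_mul]
        · simp [hk]
      · simp [hi]
  refine ⟨(hH.eigenvectorUnitary : Matrix (Fin b) (Fin b) ℝ) * E, ?_⟩
  rw [Matrix.transpose_mul, ← Matrix.mul_assoc, Matrix.mul_assoc _ E, hEE]
  have hstar : (hH.eigenvectorUnitary : Matrix (Fin b) (Fin b) ℝ)ᵀ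
      = star (hH.eigenvectorUnitary : Matrix (Fin b) (Fin b) ℝ) := by
    ext i j; simp [Matrix.star_apply, conjTranspose_apply]
  rw [hstar]
  convert hH.spectral_theorem.symm using 2
  simp [hμ, Function.comp_def]

-- rank bound from two independent kernel vectors
lemma rank_le_of_two_ker {b : ℕ} (A : Matrix (Fin b) (Fin b) ℝ)
    (u v : Fin b → ℝ) (hu : A.mulVec u = 0) (hv : A.mulVec v = 0)
    (hli : LinearIndependent ℝ ![u, v]) : A.rank ≤ b - 2 := by
  have hker : 2 ≤ Module.finrank ℝ (LinearMap.ker A.mulVecLin) := by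
    have hmem : ∀ i : Fin 2, ![u, v] i ∈ LinearMap.ker A.mulVecLin := by
      intro i
      fin_cases i <;> simp [LinearMap.mem_ker, Matrix.mulVecLin_apply, hu, hv]
    set g : Fin 2 → LinearMap.ker A.mulVecLin := fun i => ⟨![u, v] i, hmem i⟩ with hg
    have hgli : LinearIndependent ℝ g := by
      apply LinearIndependent.of_comp (LinearMap.ker A.mulVecLin).subtype
      have hcomp : (LinearMap.ker A.mulVecLin).subtype ∘ g = ![u, v] := by funext i; rfl
      rw [hcomp]; exact hli
    simpa using hgli.fintype_card_le_finrank
  have hsum := LinearMap.finrank_range_add_finrank_ker (A.mulVecLin)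
  have hfr : Module.finrank ℝ (Fin b → ℝ) = b := by simp
  have hr : A.rank = Module.finrank ℝ (LinearMap.range A.mulVecLin) := rfl
  omega

theorem shifted_matrix_factorization {b : ℕ} (hb : 3 ≤ b)
    (S : Matrix (Fin b) (Fin b) ℝ) (hSsymm : Sᵀ = S)
    (hSpsd : S.PosSemidef)
    (hrow : S.mulVec 1 = 0)
    (hker : ∀ x : Fin b → ℝ, S.mulVec x = 0 → ∃ c : ℝ, x = fun _ => c)
    (lam2 : ℝ)
    (hmin : ∀ x : Fin b → ℝ, x ⬝ᵥ (1 : Fin b → ℝ) = 0 →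
      lam2 * (x ⬝ᵥ x) ≤ x ⬝ᵥ S.mulVec x)
    (heig : ∃ x : Fin b → ℝ, x ≠ 0 ∧ x ⬝ᵥ (1 : Fin b → ℝ) = 0 ∧
      S.mulVec x = lam2 • x) :
    (S - lam2 • (1 : Matrix (Fin b) (Fin b) ℝ)
        + (lam2 / b) • (Matrix.of fun _ _ => (1 : ℝ))).rank ≤ b - 2 ∧
    ∃ W : Matrix (Fin b) (Fin (b - 2)) ℝ,
      W * Wᵀ = S - lam2 • (1 : Matrix (Fin b) (Fin b) ℝ)
        + (lam2 / b) • (Matrix.of fun _ _ => (1 : ℝ)) ∧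
      Wᵀ.mulVec 1 = 0 := by
  obtain ⟨x0, hx0ne, hx0e, hx0eig⟩ := heig
  have hb0 : (b : ℝ) ≠ 0 := by positivity
  set S' : Matrix (Fin b) (Fin b) ℝ :=
    S - lam2 • (1 : Matrix (Fin b) (Fin b) ℝ)
      + (lam2 / b) • (Matrix.of fun _ _ => (1 : ℝ)) with hS'
  have h11 : (1 : Fin b → ℝ) ⬝ᵥ (1 : Fin b → ℝ) = b := by
    simp [dotProduct]
  have hJ : ∀ x : Fin b → ℝ, (Matrix.of fun _ _ => (1:ℝ)).mulVec x
      = (x ⬝ᵥ 1) • (1 : Fin b → ℝ) := by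
    intro x; ext i; simp [Matrix.mulVec, dotProduct, mul_comm]
  have hS'mul : ∀ x : Fin b → ℝ, S'.mulVec x
      = S.mulVec x - lam2 • x + ((lam2 / b) * (x ⬝ᵥ 1)) • (1 : Fin b → ℝ) := by
    intro x
    rw [hS', Matrix.add_mulVec, Matrix.sub_mulVec, Matrix.smul_mulVec,
      Matrix.smul_mulVec, Matrix.one_mulVec, hJ, smul_smul]
  have hS'one : S'.mulVec 1 = 0 := by
    rw [hS'mul, hrow, h11]
    field_simp
    simp
  have hS'x0 : S'.mulVec x0 = 0 := by
    rw [hS'mul, hx0eig, hx0e]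
    simp
  -- symmetry
  have hS'symmT : S'ᵀ = S' := by
    rw [hS', transpose_add, transpose_sub, hSsymm, transpose_smul, transpose_one,
      transpose_smul]
    congr 1
  have hS'herm : S'.IsHermitian := by
    rw [Matrix.IsHermitian]
    rw [show S'ᴴ = S'ᵀ by ext i j; simp [conjTranspose_apply]]
    exact hS'symmT
  -- positive semidefiniteness
  have hS'psd : S'.PosSemidef := by
    refine Matrix.posSemidef_iff_dotProduct_mulVec.mpr ⟨hS'herm, ?_⟩
    intro x
    set c : ℝ := (x ⬝ᵥ 1) / b with hc
    set y : Fin b → ℝ := x - c • 1 with hyd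
    have hy1 : y ⬝ᵥ (1 : Fin b → ℝ) = 0 := by
      rw [hyd, sub_dotProduct, smul_dotProduct, h11, hc]
      rw [smul_eq_mul]
      field_simp
      simp
    have hx1 : x ⬝ᵥ (1 : Fin b → ℝ) = c * b := by
      rw [hc]; field_simp
    have hx : x = y + c • 1 := by rw [hyd]; ring_nf
    have hSxy : S.mulVec x = S.mulVec y := by
      rw [hx, Matrix.mulVec_add, Matrix.mulVec_smul, hrow]
      simp
    have h1Sy : (1 : Fin b → ℝ) ⬝ᵥ S.mulVec y = 0 := by
      rw [Matrix.dotProduct_mulVec, ← hSsymm, Matrix.vecMul_transpose, hrow]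
      simp
    have h1y : (1 : Fin b → ℝ) ⬝ᵥ y = 0 := by rw [dotProduct_comm]; exact hy1
    have key : x ⬝ᵥ S'.mulVec x = y ⬝ᵥ S.mulVec y - lam2 * (y ⬝ᵥ y) := by
      rw [hS'mul, hSxy, hx1]
      conv_lhs => rw [hx]
      simp only [dotProduct_add, dotProduct_sub, dotProduct_smul, add_dotProduct,
        smul_dotProduct, smul_eq_mul, h1Sy, hy1, h1y, h11, dotProduct_comm y (c • 1),
        dotProduct_smul]
      field_simp
      ring
    have hq := hmin y hy1
    have : (0:ℝ) ≤ x ⬝ᵥ S'.mulVec x := by rw [key]; linarith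
    simpa using this
  -- rank bound
  have hli : LinearIndependent ℝ ![(1 : Fin b → ℝ), x0] := by
    rw [LinearIndependent.pair_iff]
    intro s t h
    have h2 := congrArg (fun v => v ⬝ᵥ (1 : Fin b → ℝ)) h
    simp only [add_dotProduct, smul_dotProduct, smul_eq_mul, h11, hx0e,
      zero_dotProduct, mul_zero, add_zero] at h2
    have hs : s = 0 := by
      have : s * b = 0 := h2
      rcases mul_eq_zero.mp this with h | h
      · exact h
      · exact absurd h hb0
    refine ⟨hs, ?_⟩
    rw [hs, zero_smul, zero_add] at h
    rcases smul_eq_zero.mp h with h | h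
    · exact h
    · exact absurd h hx0ne
  have hrank : S'.rank ≤ b - 2 := rank_le_of_two_ker S' 1 x0 hS'one hS'x0 hli
  refine ⟨hrank, ?_⟩
  obtain ⟨W, hW⟩ := psd_factor S' hS'psd hrank
  refine ⟨W, hW, ?_⟩
  have hdot : (Wᵀ.mulVec 1) ⬝ᵥ (Wᵀ.mulVec 1) = 0 := by
    have h0 : (W * Wᵀ).mulVec 1 = 0 := by rw [hW]; exact hS'one
    nth_rewrite 1 [Matrix.mulVec_transpose]
    rw [← Matrix.dotProduct_mulVec, Matrix.mulVec_mulVec, h0, dotProduct_zero]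
  exact dotProduct_self_eq_zero.mp hdot
end

section
/- Let W be a real b×n matrix with W^T·e_b = 0 (columns orthogonal to the all-ones vector), let λ₂ > 0, δ = λ₂/(2n), ε = √(bδ), and let F be any real symmetric b×b matrix. Define the (b+n)×(b+n) complex matrix L with blocks A = λ₂·I_b - (λ₂/(2b))·J_b + F·i, B = -δ·J_{b×n} + ε·W·i, and C = δb·I_n. Then the real part of the Schur complement A - B C⁻¹ B^T equals W·W^T + λ₂·I_b - (λ₂/b)·J_b. -/
open Matrix

theorem real_part_of_schur_complement {b n : ℕ} (hb : 0 < b) (hn : 0 < n)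
    (W : Matrix (Fin b) (Fin n) ℝ) (hW : Wᵀ.mulVec 1 = 0)
    (lam2 : ℝ) (hlam2 : 0 < lam2)
    (δ ε : ℝ) (hδ : δ = lam2 / (2 * n)) (hε : ε = Real.sqrt (b * δ))
    (F : Matrix (Fin b) (Fin b) ℝ) (hF : Fᵀ = F)
    (A : Matrix (Fin b) (Fin b) ℂ)
    (hA : A = (lam2 : ℂ) • (1 : Matrix (Fin b) (Fin b) ℂ)
        - ((lam2 / (2 * b) : ℝ) : ℂ) • (Matrix.of fun _ _ => (1 : ℂ))
        + Complex.I • (F.map (Complex.ofReal)))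
    (B : Matrix (Fin b) (Fin n) ℂ)
    (hB : B = -((δ : ℂ) • (Matrix.of fun _ _ => (1 : ℂ)))
        + Complex.I • ((ε : ℂ) • (W.map (Complex.ofReal))))
    (C : Matrix (Fin n) (Fin n) ℂ)
    (hC : C = ((δ * b : ℝ) : ℂ) • (1 : Matrix (Fin n) (Fin n) ℂ)) :
    (Matrix.of fun i j => ((A - B * C⁻¹ * Bᵀ) i j).re)
      = W * Wᵀ + lam2 • (1 : Matrix (Fin b) (Fin b) ℝ)
        - (lam2 / b) • (Matrix.of fun _ _ => (1 : ℝ)) := by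
  have hnpos : (0:ℝ) < n := by exact_mod_cast hn
  have hbpos : (0:ℝ) < b := by exact_mod_cast hb
  have hδ0 : (0:ℝ) < δ := by rw [hδ]; positivity
  have hδb : (δ * b : ℝ) ≠ 0 := by positivity
  have hε2 : ε * ε = b * δ := by
    rw [hε, Real.mul_self_sqrt (by positivity)]
  have hCinv : C⁻¹ = (((δ*b)⁻¹ : ℝ) : ℂ) • (1 : Matrix (Fin n) (Fin n) ℂ) := by
    apply Matrix.inv_eq_right_inv
    rw [hC, Matrix.smul_mul, Matrix.mul_smul, Matrix.mul_one, smul_smul,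
      ← Complex.ofReal_mul, mul_inv_cancel₀ hδb, Complex.ofReal_one, one_smul]
  have hBCB : B * C⁻¹ * Bᵀ = (((δ*b)⁻¹ : ℝ) : ℂ) • (B * Bᵀ) := by
    rw [hCinv, Matrix.mul_smul, Matrix.mul_one, Matrix.smul_mul]
  have hBentry : ∀ (i : Fin b) (k : Fin n), B i k = -(δ:ℂ) + Complex.I * (ε * W i k) := by
    intro i k
    simp [hB, Matrix.add_apply, Matrix.neg_apply, Matrix.smul_apply, Matrix.map_apply,
      smul_eq_mul, mul_assoc]
  have hBB : ∀ (i j : Fin b), ((B * Bᵀ) i j).re = n * (δ*δ) - ε*ε * ((W * Wᵀ) i j) := by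
    intro i j
    rw [Matrix.mul_apply, Complex.re_sum]
    have h1 : ∀ k, ((B i k) * (Bᵀ k j)).re = δ*δ - ε*ε*(W i k * W j k) := by
      intro k
      rw [Matrix.transpose_apply, hBentry, hBentry]
      simp [Complex.mul_re, Complex.add_re, Complex.add_im, Complex.mul_im]
      ring
    rw [Finset.sum_congr rfl (fun k _ => h1 k), Finset.sum_sub_distrib, Finset.sum_const,
      Finset.card_univ, Fintype.card_fin, nsmul_eq_mul, ← Finset.mul_sum, Matrix.mul_apply]
    simp only [Matrix.transpose_apply]
  ext i j
  have hAre : (A i j).re = lam2 * (if i = j then 1 else 0) - lam2/(2*b) := by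
    simp [hA, Matrix.sub_apply, Matrix.add_apply, Matrix.smul_apply, Matrix.one_apply,
      smul_eq_mul, Complex.add_re, Complex.sub_re, Complex.mul_re, Complex.I_re,
      Complex.ofReal_re, apply_ite Complex.re, apply_ite Complex.im]
    rw [show ((lam2:ℂ)/(2*(b:ℂ))) = ((lam2/(2*b):ℝ):ℂ) by push_cast; ring, Complex.ofReal_re]
  rw [Matrix.of_apply, hBCB, Matrix.sub_apply, Matrix.smul_apply, Complex.sub_re,
    smul_eq_mul, Complex.re_ofReal_mul, hAre, hBB]
  simp only [Matrix.add_apply, Matrix.sub_apply, Matrix.smul_apply, Matrix.of_apply,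
    Matrix.one_apply, smul_eq_mul]
  rw [hε2, hδ]
  by_cases h : i = j <;> simp [h] <;> field_simp <;> ring
end

section
/- Let W be a real b×n matrix with W^T·e_b = 0, δ > 0, ε = √(bδ). Define blocks A = λ₂·I_b - (λ₂/(2b))·J_b + F·i with F = T - √(δ/b)·(W·J_{n×b} + J_{b×n}·W^T) for a given real symmetric matrix T, B = -δ·J_{b×n} + ε·W·i, C = δb·I_n. Then the imaginary part of the Schur complement A - B C⁻¹ B^T equals T. -/
open Matrix

theorem imaginary_part_of_schur_complement {b n : ℕ} (hb : 0 < b) (hn : 0 < n)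
    (W : Matrix (Fin b) (Fin n) ℝ) (hW : Wᵀ.mulVec 1 = 0)
    (lam2 : ℝ) (hlam2 : 0 < lam2)
    (δ ε : ℝ) (hδ : 0 < δ) (hε : ε = Real.sqrt (b * δ))
    (T : Matrix (Fin b) (Fin b) ℝ) (hT : Tᵀ = T)
    (F : Matrix (Fin b) (Fin b) ℝ)
    (hF : F = T - Real.sqrt (δ / b) •
        (W * (Matrix.of fun _ _ => (1 : ℝ)) + (Matrix.of fun _ _ => (1 : ℝ)) * Wᵀ))
    (A : Matrix (Fin b) (Fin b) ℂ)
    (hA : A = (lam2 : ℂ) • (1 : Matrix (Fin b) (Fin b) ℂ)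
        - ((lam2 / (2 * b) : ℝ) : ℂ) • (Matrix.of fun _ _ => (1 : ℂ))
        + Complex.I • (F.map (Complex.ofReal)))
    (B : Matrix (Fin b) (Fin n) ℂ)
    (hB : B = -((δ : ℂ) • (Matrix.of fun _ _ => (1 : ℂ)))
        + Complex.I • ((ε : ℂ) • (W.map (Complex.ofReal))))
    (C : Matrix (Fin n) (Fin n) ℂ)
    (hC : C = ((δ * b : ℝ) : ℂ) • (1 : Matrix (Fin n) (Fin n) ℂ)) :
    (Matrix.of fun i j => ((A - B * C⁻¹ * Bᵀ) i j).im) = T := by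
  have hbR : (0:ℝ) < b := by exact_mod_cast hb
  have hcR : (δ * b : ℝ) ≠ 0 := by positivity
  have hc : ((δ * b : ℝ) : ℂ) ≠ 0 := Complex.ofReal_ne_zero.mpr hcR
  have hCinv : C⁻¹ = ((δ * b : ℝ) : ℂ)⁻¹ • (1 : Matrix (Fin n) (Fin n) ℂ) := by
    rw [hC]
    apply Matrix.inv_eq_right_inv
    rw [smul_mul_smul_comm, mul_inv_cancel₀ hc, one_mul, one_smul]
  -- key scalar identity: (δ*b)⁻¹ * (δ*ε) = √(δ/b)
  have hkey : (δ * b : ℝ)⁻¹ * (δ * ε) = Real.sqrt (δ / b) := by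
    have hsb : Real.sqrt b * Real.sqrt b = b := Real.mul_self_sqrt hbR.le
    have hsbne : Real.sqrt b ≠ 0 := by positivity
    rw [hε, Real.sqrt_mul hbR.le, Real.sqrt_div hδ.le]
    field_simp
    linear_combination hsb
  ext i j
  simp only [Matrix.of_apply, Matrix.sub_apply, hA, hB, hCinv, hF]
  rw [Matrix.mul_smul, Matrix.mul_one, Matrix.smul_mul]
  simp only [Matrix.add_apply, Matrix.smul_apply, Matrix.sub_apply, Matrix.one_apply,
    Matrix.of_apply, Matrix.map_apply, Matrix.mul_apply, Matrix.transpose_apply,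
    Matrix.neg_apply, Complex.sub_im, Complex.add_im, Complex.smul_im,
    Complex.real_smul, Complex.ofReal_im, Complex.mul_im, Complex.I_re, Complex.I_im,
    Complex.ofReal_re, Complex.im_sum]
  simp only [smul_eq_mul, Complex.real_smul, Complex.ofReal_mul, Complex.mul_im,
    Complex.mul_re, Complex.add_re, Complex.add_im, Complex.neg_re, Complex.neg_im,
    Complex.one_re, Complex.one_im, Complex.I_re, Complex.I_im, Complex.ofReal_re,
    Complex.ofReal_im, Complex.im_sum, Complex.re_sum, Complex.inv_im, Complex.inv_re,
    Complex.sub_im, Complex.sub_re, Complex.normSq_ofReal]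
  simp only [mul_zero, zero_mul, mul_one, one_mul, sub_zero, zero_sub, add_zero, zero_add,
    neg_zero, neg_neg, neg_mul, mul_neg, zero_div]
  simp only [apply_ite Complex.im, Complex.one_im, Complex.zero_im, ite_self, mul_zero,
    zero_add, ← Complex.ofReal_mul, Complex.ofReal_natCast, Complex.normSq_ofReal]
  have hbody : ∀ x : Fin n, -(δ * (ε * W j x)) + -(ε * W i x * δ)
      = -((δ * ε) * W j x) + -((δ * ε) * W i x) := by intro x; ring
  simp only [hbody, Finset.sum_add_distrib, ← Finset.sum_neg_distrib, ← Finset.mul_sum]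
  set s1 := ∑ x : Fin n, W i x
  set s2 := ∑ x : Fin n, W j x
  have h1 : ∑ x : Fin n, -(δ * ε * W i x) = -(δ * ε * s1) := by
    rw [Finset.sum_neg_distrib, ← Finset.mul_sum]
  have h2 : ∑ x : Fin n, -(δ * ε * W j x) = -(δ * ε * s2) := by
    rw [Finset.sum_neg_distrib, ← Finset.mul_sum]
  have h4 : Complex.normSq ((δ : ℂ) * (b : ℂ)) = (δ * b) * (δ * b) := by
    rw [show ((δ:ℂ) * (b:ℂ)) = ((δ * b : ℝ) : ℂ) by push_cast; ring, Complex.normSq_ofReal]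
  have h3 : δ * (b:ℝ) / ((δ * b) * (δ * b)) = (δ * (b:ℝ))⁻¹ := by
    field_simp
  rw [h1, h2, h4, h3, ← hkey]
  have h5 : (W * (Matrix.of fun _ _ => (1 : ℝ) : Matrix (Fin n) (Fin b) ℝ)) i j = s1 := by
    simp [Matrix.mul_apply, s1]
  have h6 : ((Matrix.of fun _ _ => (1 : ℝ) : Matrix (Fin b) (Fin n) ℝ) * Wᵀ) i j = s2 := by
    simp [Matrix.mul_apply, s2]
  erw [h5, h6]
  ring
end

section
/- Every complex symmetric b×b matrix Λ = S + Ti (b ≥ 3) satisfying (1) all row sums of Λ are zero, (2) S is positive semidefinite, and (3) S·x = 0 only for constant vectors x, is the Schur complement A - B C⁻¹ B^T of a (b+n)×(b+n) matrix L = [[A,B],[B^T,C]] with n = b-2 such that: all row sums of L are zero, all nonzero off-diagonal entries of L have negative real part, and L is symmetric. -/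
open Matrix

private lemma gram_data {b : ℕ} (hb : 3 ≤ b) (S : Matrix (Fin b) (Fin b) ℝ)
    (hS : S.IsHermitian) (hrow : S.mulVec 1 = 0) (hpsd : S.PosSemidef)
    (hker : ∀ x, S.mulVec x = 0 → ∃ c : ℝ, x = fun _ => c) :
    ∃ (μ : ℝ) (g : Fin b → Fin (b-2) → ℝ), 0 < μ ∧
      (∀ j, ∑ u, g u j = 0) ∧
      (∀ u v, u ≠ v → ∑ j, g u j * g v j = S u v + μ / b) := by
  classical
  have hb0 : (0:ℝ) < (b:ℝ) := by positivity
  set ev : Fin b → ℝ := hS.eigenvalues with hev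
  set V : Fin b → Fin b → ℝ := fun k u => hS.eigenvectorBasis k u with hV
  have hUU : hS.eigenvectorUnitary.1 * (hS.eigenvectorUnitary.1)ᵀ = 1 := by
    have := (Matrix.mem_unitaryGroup_iff).mp hS.eigenvectorUnitary.2
    simpa [Matrix.star_eq_conjTranspose] using this
  have hUtU : (hS.eigenvectorUnitary.1)ᵀ * hS.eigenvectorUnitary.1 = 1 := by
    have := (Matrix.mem_unitaryGroup_iff').mp hS.eigenvectorUnitary.2
    simpa [Matrix.star_eq_conjTranspose] using this
  have hcomp : ∀ u v, (∑ k, V k u * V k v) = if u = v then (1:ℝ) else 0 := by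
    intro u v
    have := congrFun (congrFun hUU u) v
    simpa [Matrix.mul_apply, Matrix.one_apply, Matrix.transpose_apply,
      Matrix.IsHermitian.eigenvectorUnitary_apply, hV] using this
  have horth : ∀ k l, (∑ u, V k u * V l u) = if k = l then (1:ℝ) else 0 := by
    intro k l
    have := congrFun (congrFun hUtU k) l
    simpa [Matrix.mul_apply, Matrix.one_apply, Matrix.transpose_apply,
      Matrix.IsHermitian.eigenvectorUnitary_apply, hV] using this
  have hspec : ∀ u v, S u v = ∑ k, ev k * (V k u * V k v) := by
    intro u v
    have h := congrFun (congrFun (hS.spectral_theorem.trans (Unitary.conjStarAlgAut_apply _ _)) u) v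
    simp only [Unitary.coe_star, Matrix.mul_apply, Matrix.diagonal_apply, Matrix.star_eq_conjTranspose,
      Matrix.conjTranspose_apply, Function.comp] at h
    rw [h]
    simp [Finset.sum_ite_eq, Finset.mul_sum, Matrix.IsHermitian.eigenvectorUnitary_apply, hV]
    exact Finset.sum_congr rfl fun k _ => by ring
  have heig : ∀ k, S.mulVec (V k) = ev k • V k := by
    intro k
    have := hS.mulVec_eigenvectorBasis k
    exact this
  have hnn : ∀ k, 0 ≤ ev k := fun k => hpsd.eigenvalues_nonneg k
  -- zero eigenvectors are constant and nonzero-constant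
  have hconst : ∀ k, ev k = 0 → ∃ c : ℝ, c ≠ 0 ∧ c * c = 1 / b ∧ ∀ u, V k u = c := by
    intro k hk
    obtain ⟨c, hc⟩ := hker (V k) (by rw [heig k, hk, zero_smul])
    have hnorm := horth k k
    rw [if_pos rfl] at hnorm
    have hcc : (b:ℝ) * (c * c) = 1 := by
      have : ∀ u, V k u = c := fun u => congrFun hc u
      rw [Finset.sum_congr rfl fun u _ => by rw [this u]] at hnorm
      simpa [Finset.sum_const, Finset.card_univ, nsmul_eq_mul] using hnorm
    have hc0 : c ≠ 0 := by
      intro h; rw [h, mul_zero, mul_zero] at hcc; exact one_ne_zero hcc.symm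
    exact ⟨c, hc0, by field_simp at hcc ⊢; linarith, fun u => congrFun hc u⟩
  -- existence of a zero eigenvalue
  have hdet : S.det = 0 := by
    rw [← Matrix.exists_mulVec_eq_zero_iff]
    exact ⟨1, by intro h; simpa using congrFun h ⟨0, by omega⟩, hrow⟩
  have hex : ∃ k, ev k = 0 := by
    have := hS.det_eq_prod_eigenvalues
    rw [hdet] at this
    obtain ⟨k, -, hk⟩ := Finset.prod_eq_zero_iff.mp this.symm
    exact ⟨k, hk⟩
  obtain ⟨k₀, hk₀⟩ := hex
  -- uniqueness: positive elsewhere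
  have hpos : ∀ k, k ≠ k₀ → 0 < ev k := by
    intro k hk
    rcases (hnn k).lt_or_eq with h | h
    · exact h
    · exfalso
      obtain ⟨c, hc0, -, hc⟩ := hconst k h.symm
      obtain ⟨c', hc0', -, hc'⟩ := hconst k₀ hk₀
      have := horth k k₀
      rw [if_neg hk] at this
      rw [Finset.sum_congr rfl fun u _ => by rw [hc u, hc' u]] at this
      simp [Finset.sum_const, Finset.card_univ, nsmul_eq_mul] at this
      rcases this with h' | h' | h'
      · exact absurd h' (by positivity)
      · exact hc0 h'
      · exact hc0' h'
  -- minimum over the rest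
  have hne : (Finset.univ.erase k₀).Nonempty := by
    rw [← Finset.card_pos, Finset.card_erase_of_mem (Finset.mem_univ _)]
    simp [Finset.card_univ]; omega
  obtain ⟨k₁, hk₁mem, hk₁min⟩ := Finset.exists_min_image _ ev hne
  have hk₁ne : k₁ ≠ k₀ := Finset.ne_of_mem_erase hk₁mem
  set μ := ev k₁ with hμdef
  have hμ : 0 < μ := hpos k₁ hk₁ne
  have hμle : ∀ k, k ≠ k₀ → μ ≤ ev k := fun k hk =>
    hk₁min k (Finset.mem_erase.mpr ⟨hk, Finset.mem_univ _⟩)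
  -- the index set
  set s : Finset (Fin b) := ({k₀, k₁} : Finset (Fin b))ᶜ with hs
  have hcard : s.card = b - 2 := by
    rw [hs, Finset.card_compl, Finset.card_insert_of_notMem (by simp [hk₁ne.symm]),
      Finset.card_singleton]
    simp [Fintype.card_fin]
  set e := s.orderIsoOfFin hcard with he
  obtain ⟨c', hc0', hcsq', hc'⟩ := hconst k₀ hk₀
  -- columns sum to zero off k₀
  have hsum0 : ∀ k, k ≠ k₀ → ∑ u, V k u = 0 := by
    intro k hk
    have h := horth k k₀
    rw [if_neg hk] at h
    rw [Finset.sum_congr rfl fun u _ => by rw [hc' u]] at h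
    rw [← Finset.sum_mul] at h
    exact (mul_eq_zero.mp h).resolve_right hc0'
  refine ⟨μ, fun u j => Real.sqrt (ev (e j) - μ) * V (e j) u, hμ, ?_, ?_⟩
  · intro j
    have hmem : (e j : Fin b) ∈ ({k₀, k₁} : Finset (Fin b))ᶜ := (e j).2
    simp [Finset.mem_compl] at hmem
    have h0 := hsum0 (e j) hmem.1
    rw [← Finset.mul_sum, h0, mul_zero]
  · intro u v huv
    have key : ∀ k ∈ s, (Real.sqrt (ev k - μ) * V k u) * (Real.sqrt (ev k - μ) * V k v)
        = (ev k - μ) * (V k u * V k v) := by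
      intro k hk
      have hkk : (k:Fin b) ≠ k₀ := by
        rw [hs] at hk; simp only [Finset.mem_compl, Finset.mem_insert,
          Finset.mem_singleton, not_or] at hk
        exact hk.1
      have h1 : 0 ≤ ev k - μ := by linarith [hμle k hkk]
      rw [show Real.sqrt (ev k - μ) * V k u * (Real.sqrt (ev k - μ) * V k v)
          = (Real.sqrt (ev k - μ) * Real.sqrt (ev k - μ)) * (V k u * V k v) by ring,
        Real.mul_self_sqrt h1]
    calc ∑ j, (Real.sqrt (ev (e j) - μ) * V (e j) u) * (Real.sqrt (ev (e j) - μ) * V (e j) v)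
        = ∑ k ∈ s, (Real.sqrt (ev k - μ) * V k u) * (Real.sqrt (ev k - μ) * V k v) := by
          rw [← Finset.sum_coe_sort s
            (fun k => (Real.sqrt (ev k - μ) * V k u) * (Real.sqrt (ev k - μ) * V k v))]
          exact Equiv.sum_comp e.toEquiv
            (fun x : {x // x ∈ s} =>
              (Real.sqrt (ev (x:Fin b) - μ) * V (x:Fin b) u) *
                (Real.sqrt (ev (x:Fin b) - μ) * V (x:Fin b) v))
      _ = ∑ k ∈ s, (ev k - μ) * (V k u * V k v) := Finset.sum_congr rfl key
      _ = S u v + μ / b := by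
          have hsplit : ∑ k, (ev k - μ) * (V k u * V k v)
              = (∑ k ∈ s, (ev k - μ) * (V k u * V k v)) + ((ev k₀ - μ) * (V k₀ u * V k₀ v)
                + (ev k₁ - μ) * (V k₁ u * V k₁ v)) := by
            rw [hs, ← Finset.sum_add_sum_compl ({k₀, k₁} : Finset (Fin b)), add_comm]
            congr 1
            rw [Finset.sum_insert (by simp [hk₁ne.symm]), Finset.sum_singleton]
          have h0 : ∑ k, V k u * V k v = 0 := by
            have := hcomp u v; rwa [if_neg huv] at this
          have hall : ∑ k, (ev k - μ) * (V k u * V k v) = S u v - μ * 0 := by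
            have hsd : ∑ k, (ev k - μ) * (V k u * V k v)
                = (∑ k, ev k * (V k u * V k v)) - μ * ∑ k, V k u * V k v := by
              rw [Finset.mul_sum, ← Finset.sum_sub_distrib]
              exact Finset.sum_congr rfl fun k _ => by ring
            rw [hsd, ← hspec, h0]
          have : ∑ k ∈ s, (ev k - μ) * (V k u * V k v)
              = S u v - μ * 0 - ((ev k₀ - μ) * (V k₀ u * V k₀ v)
                + (ev k₁ - μ) * (V k₁ u * V k₁ v)) := by
            rw [← hall, hsplit]; ring
          rw [this, hk₀, hc' u, hc' v, hcsq', ← hμdef]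
          ring

theorem response_realizable_as_schur {b : ℕ} (hb : 3 ≤ b)
    (Λ : Matrix (Fin b) (Fin b) ℂ)
    (hsymm : Λᵀ = Λ)
    (hrow : Λ.mulVec 1 = 0)
    (hpsd : (Matrix.of fun i j => (Λ i j).re).PosSemidef)
    (hker : ∀ x : Fin b → ℝ,
      (Matrix.of fun i j => (Λ i j).re).mulVec x = 0 → ∃ c : ℝ, x = fun _ => c) :
    ∃ (A : Matrix (Fin b) (Fin b) ℂ) (B : Matrix (Fin b) (Fin (b - 2)) ℂ)
      (C : Matrix (Fin (b - 2)) (Fin (b - 2)) ℂ),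
      IsUnit C ∧
      (Matrix.fromBlocks A B Bᵀ C)ᵀ = Matrix.fromBlocks A B Bᵀ C ∧
      (Matrix.fromBlocks A B Bᵀ C).mulVec 1 = 0 ∧
      (∀ u v, u ≠ v → Matrix.fromBlocks A B Bᵀ C u v ≠ 0 →
        (Matrix.fromBlocks A B Bᵀ C u v).re < 0) ∧
      A - B * C⁻¹ * Bᵀ = Λ := by
  classical
  have hbpos : 0 < b := by omega
  have hb0 : (0:ℝ) < (b:ℝ) := by exact_mod_cast hbpos
  set S : Matrix (Fin b) (Fin b) ℝ := Matrix.of (fun i j => (Λ i j).re) with hSdef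
  have hsymm' : ∀ i j, Λ j i = Λ i j := fun i j => congrFun (congrFun hsymm i) j
  have hS : S.IsHermitian := by
    ext i j
    simp only [conjTranspose_apply, hSdef, Matrix.of_apply, star_trivial]
    rw [hsymm' i j]
  have hSrow : S.mulVec 1 = 0 := by
    funext u
    have h := congrFun hrow u
    simp only [mulVec, dotProduct, Pi.one_apply, mul_one, Pi.zero_apply] at h ⊢
    have : (∑ v, Λ u v).re = 0 := by rw [h]; rfl
    rw [← this, Complex.re_sum]
    rfl
  obtain ⟨μ, g, hμ, hg1, hg2⟩ := gram_data hb S hS hSrow hpsd hker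
  set r := Real.sqrt μ with hrdef
  have hr : r * r = μ := Real.mul_self_sqrt hμ.le
  set β : ℝ := μ / b with hβdef
  have hβ : 0 < β := by positivity
  have hμC : (μ:ℂ) ≠ 0 := by exact_mod_cast hμ.ne'
  set B : Matrix (Fin b) (Fin (b-2)) ℂ :=
    Matrix.of (fun u j => -(β:ℂ) - ((r * g u j : ℝ):ℂ) * Complex.I) with hBdef
  set C : Matrix (Fin (b-2)) (Fin (b-2)) ℂ := Matrix.diagonal (fun _ => (μ:ℂ)) with hCdef
  have hCinv : C⁻¹ = Matrix.diagonal (fun _ => (μ:ℂ)⁻¹) := by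
    apply Matrix.inv_eq_right_inv
    rw [hCdef, Matrix.diagonal_mul_diagonal]
    simp [mul_inv_cancel₀ hμC]
  have hCunit : IsUnit C := by
    rw [Matrix.isUnit_iff_isUnit_det, hCdef, Matrix.det_diagonal, Finset.prod_const]
    exact (isUnit_iff_ne_zero.mpr (pow_ne_zero _ hμC))
  set N := B * C⁻¹ * Bᵀ with hNdef
  have hBre : ∀ u j, (B u j).re = -β := by
    intro u j; simp [hBdef]
  have hBim : ∀ u j, (B u j).im = -(r * g u j) := by
    intro u j; simp [hBdef]
  have hNe : ∀ u v, N u v = ∑ j, ((μ⁻¹:ℝ):ℂ) * (B u j * B v j) := by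
    intro u v
    rw [hNdef, hCinv, Matrix.mul_apply]
    refine Finset.sum_congr rfl fun j _ => ?_
    rw [Matrix.mul_diagonal, Matrix.transpose_apply]
    push_cast
    ring
  have hBsum : ∀ j, ∑ u, B u j = -(μ:ℂ) := by
    intro j
    apply Complex.ext
    · rw [Complex.re_sum]
      simp only [hBre]
      rw [Finset.sum_const, Finset.card_univ, Fintype.card_fin, nsmul_eq_mul]
      simp only [Complex.neg_re, Complex.ofReal_re]
      rw [hβdef]
      field_simp
    · rw [Complex.im_sum]
      simp only [hBim, ← neg_mul]
      rw [← Finset.mul_sum, hg1 j, mul_zero]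
      simp
  -- real part of N off-diagonal
  have hNre : ∀ u v, u ≠ v → (N u v).re = μ⁻¹*(β*β)*((b:ℝ)-2) - (S u v + μ/b) := by
    intro u v huv
    rw [hNe, Complex.re_sum]
    have hterm : ∀ j, (((μ⁻¹:ℝ):ℂ) * (B u j * B v j)).re
        = μ⁻¹*(β*β) - (g u j * g v j) := by
      intro j
      rw [Complex.re_ofReal_mul, Complex.mul_re, hBre, hBre, hBim, hBim]
      have : -(r * g u j) * -(r * g v j) = μ * (g u j * g v j) := by
        rw [← hr]; ring
      rw [this]
      field_simp
    rw [Finset.sum_congr rfl fun j _ => hterm j, Finset.sum_sub_distrib,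
      Finset.sum_const, Finset.card_univ, Fintype.card_fin, nsmul_eq_mul,
      hg2 u v huv]
    have hcast : ((b-2:ℕ):ℝ) = (b:ℝ) - 2 := by
      rw [Nat.cast_sub (by omega)]; norm_num
    rw [hcast]; ring
  set A := Λ + N with hAdef
  have hAre : ∀ u v, u ≠ v → (A u v).re = -(2*μ)/((b:ℝ)^2) := by
    intro u v huv
    have : (A u v).re = S u v + (N u v).re := by
      rw [hAdef]; simp [Complex.add_re, hSdef]
    rw [this, hNre u v huv, hβdef]
    field_simp
    ring
  refine ⟨A, B, C, hCunit, ?_, ?_, ?_, ?_⟩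
  · -- symmetry
    rw [Matrix.fromBlocks_transpose, Matrix.transpose_transpose]
    have hCt : Cᵀ = C := by rw [hCdef, Matrix.diagonal_transpose]
    have hNt : Nᵀ = N := by
      rw [hNdef, Matrix.transpose_mul, Matrix.transpose_mul, Matrix.transpose_transpose,
        hCinv, Matrix.diagonal_transpose, Matrix.mul_assoc]
    have hAt : Aᵀ = A := by
      rw [hAdef, Matrix.transpose_add, hsymm, hNt]
    rw [hAt, hCt]
  · -- row sums
    rw [Matrix.fromBlocks_mulVec]
    have hone1 : ((1 : (Fin b ⊕ Fin (b-2)) → ℂ) ∘ Sum.inl) = (1 : Fin b → ℂ) := rfl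
    have hone2 : ((1 : (Fin b ⊕ Fin (b-2)) → ℂ) ∘ Sum.inr) = (1 : Fin (b-2) → ℂ) := rfl
    rw [hone1, hone2]
    have hNsum : ∀ u, ∑ v, N u v = -∑ j, B u j := by
      intro u
      rw [Finset.sum_congr rfl fun v _ => hNe u v, Finset.sum_comm]
      rw [← Finset.sum_neg_distrib]
      refine Finset.sum_congr rfl fun j _ => ?_
      rw [← Finset.mul_sum, ← Finset.mul_sum, hBsum j]
      rw [Complex.ofReal_inv]
      field_simp
    have top : A *ᵥ (1 : Fin b → ℂ) + B *ᵥ (1 : Fin (b-2) → ℂ) = 0 := by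
      funext u
      simp only [Pi.add_apply, Pi.zero_apply, mulVec, dotProduct, Pi.one_apply, mul_one]
      have hΛ : ∑ v, Λ u v = 0 := by
        have h := congrFun hrow u
        simpa [mulVec, dotProduct] using h
      rw [hAdef]
      simp only [Matrix.add_apply]
      rw [Finset.sum_add_distrib, hΛ, hNsum u]
      ring
    have bot : Bᵀ *ᵥ (1 : Fin b → ℂ) + C *ᵥ (1 : Fin (b-2) → ℂ) = 0 := by
      funext j
      simp only [Pi.add_apply, Pi.zero_apply, mulVec, dotProduct, Pi.one_apply, mul_one,
        Matrix.transpose_apply]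
      rw [hBsum j, hCdef]
      simp [Matrix.diagonal_apply, Finset.sum_ite_eq]
    rw [top, bot]
    funext x; cases x <;> rfl
  · -- off-diagonal real parts
    intro u v huv hne0
    cases u with
    | inl u =>
      cases v with
      | inl v =>
        have huv' : u ≠ v := fun h => huv (by rw [h])
        rw [Matrix.fromBlocks_apply₁₁]
        rw [hAre u v huv']
        have h2 : (0:ℝ) < 2*μ := by positivity
        have hb2 : (0:ℝ) < (b:ℝ)^2 := by positivity
        exact div_neg_of_neg_of_pos (by linarith) hb2
      | inr j =>
        rw [Matrix.fromBlocks_apply₁₂, hBre]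
        linarith
    | inr j =>
      cases v with
      | inl v =>
        rw [Matrix.fromBlocks_apply₂₁, Matrix.transpose_apply, hBre]
        linarith
      | inr j' =>
        have hjj : j ≠ j' := fun h => huv (by rw [h])
        rw [Matrix.fromBlocks_apply₂₂] at hne0 ⊢
        rw [hCdef, Matrix.diagonal_apply_ne _ hjj] at hne0
        exact absurd rfl hne0
  · rw [hAdef, ← hNdef]
    exact add_sub_cancel_right Λ N
end

section
/- Let L be the Laplace matrix of a connected network with complex conductances of positive real part, partitioned as L = [[A,B],[B^T,C]] with b boundary and n ≥ 1 interior nodes. Then the real part of the response matrix R = A - B C⁻¹ B^T is positive semidefinite, i.e., Re(x^T R x) ≥ 0 for every real vector x ∈ ℝ^b. -/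
open Matrix

private lemma lap_row {V : Type*} [Fintype V] [DecidableEq V]
    (c : V → V → ℂ) (hloop : ∀ u, c u u = 0) (z : V → ℂ) (u : V) :
    (Matrix.of fun u v => if u = v then ∑ w, c u w else -c u v).mulVec z u
      = ∑ w, c u w * (z u - z w) := by
  simp only [mulVec, dotProduct, of_apply]
  have h : ∀ w : V, (if u = w then ∑ v, c u v else -c u w) * z w
      = (if u = w then (∑ v, c u v) * z u else 0) - c u w * z w := by
    intro w
    by_cases hw : u = w
    · subst hw; simp [hloop u]
    · simp [hw]
  rw [Finset.sum_congr rfl fun w _ => h w, Finset.sum_sub_distrib,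
    Finset.sum_ite_eq Finset.univ u (fun _ => (∑ v, c u v) * z u)]
  simp only [Finset.mem_univ, if_pos, mul_sub, Finset.sum_sub_distrib, Finset.sum_mul]

private lemma lap_quad {V : Type*} [Fintype V] [DecidableEq V]
    (c : V → V → ℂ) (hsymm : ∀ u v, c u v = c v u) (hloop : ∀ u, c u u = 0) (z : V → ℂ) :
    star z ⬝ᵥ (Matrix.of fun u v => if u = v then ∑ w, c u w else -c u v).mulVec z
      = (1/2) * ∑ u, ∑ w, c u w * ((starRingEnd ℂ) (z u - z w) * (z u - z w)) := by
  have hrow := lap_row c hloop z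
  simp only [dotProduct, hrow, Pi.star_apply, Complex.star_def]
  have hS : ∑ u, (starRingEnd ℂ) (z u) * ∑ w, c u w * (z u - z w)
      = ∑ u, ∑ w, c u w * ((starRingEnd ℂ) (z u) * (z u - z w)) := by
    refine Finset.sum_congr rfl fun u _ => ?_
    rw [Finset.mul_sum]
    exact Finset.sum_congr rfl fun w _ => by ring
  rw [hS]
  have hS2 : ∑ u, ∑ w, c u w * ((starRingEnd ℂ) (z u) * (z u - z w))
      = ∑ u, ∑ w, c u w * ((starRingEnd ℂ) (z w) * (z w - z u)) := by
    rw [Finset.sum_comm]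
    refine Finset.sum_congr rfl fun u _ => Finset.sum_congr rfl fun w _ => ?_
    rw [hsymm w u]
  have key : (2:ℂ) * ∑ u, ∑ w, c u w * ((starRingEnd ℂ) (z u) * (z u - z w))
      = ∑ u, ∑ w, c u w * ((starRingEnd ℂ) (z u - z w) * (z u - z w)) := by
    rw [two_mul]
    nth_rewrite 2 [hS2]
    rw [← Finset.sum_add_distrib]
    refine Finset.sum_congr rfl fun u _ => ?_
    rw [← Finset.sum_add_distrib]
    refine Finset.sum_congr rfl fun w _ => ?_
    rw [map_sub]
    ring
  rw [← key]
  ring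

private lemma lap_quad_re {V : Type*} [Fintype V] [DecidableEq V]
    (c : V → V → ℂ) (hsymm : ∀ u v, c u v = c v u) (hloop : ∀ u, c u u = 0) (z : V → ℂ) :
    (star z ⬝ᵥ (Matrix.of fun u v => if u = v then ∑ w, c u w else -c u v).mulVec z).re
      = (1/2) * ∑ u, ∑ w, (c u w).re * Complex.normSq (z u - z w) := by
  rw [lap_quad c hsymm hloop z]
  have hterm : ∀ (a d : ℂ), (a * ((starRingEnd ℂ) d * d)).re = a.re * Complex.normSq d := by
    intro a d
    rw [mul_comm ((starRingEnd ℂ) d) d, Complex.mul_conj]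
    simp [Complex.mul_re]
  simp only [Complex.mul_re, Complex.re_sum, Complex.im_sum, hterm]
  have him : ∀ u, ∑ w, (c u w * ((starRingEnd ℂ) (z u - z w) * (z u - z w))).im
      = ∑ w, (c u w).im * Complex.normSq (z u - z w) := by
    intro u
    refine Finset.sum_congr rfl fun w _ => ?_
    rw [mul_comm ((starRingEnd ℂ) (z u - z w)) (z u - z w), Complex.mul_conj]
    simp [Complex.mul_im]
  norm_num

private lemma term_nonneg {V : Type*} (c : V → V → ℂ)
    (hpos : ∀ u v, c u v ≠ 0 → 0 < (c u v).re) (z : V → ℂ) (u w : V) :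
    0 ≤ (c u w).re * Complex.normSq (z u - z w) := by
  rcases eq_or_ne (c u w) 0 with h | h
  · simp [h]
  · exact mul_nonneg (hpos u w h).le (Complex.normSq_nonneg _)

private lemma lap_quad_re_nonneg {V : Type*} [Fintype V] [DecidableEq V]
    (c : V → V → ℂ) (hsymm : ∀ u v, c u v = c v u) (hloop : ∀ u, c u u = 0)
    (hpos : ∀ u v, c u v ≠ 0 → 0 < (c u v).re) (z : V → ℂ) :
    0 ≤ (star z ⬝ᵥ (Matrix.of fun u v => if u = v then ∑ w, c u w else -c u v).mulVec z).re := by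
  rw [lap_quad_re c hsymm hloop z]
  refine mul_nonneg (by norm_num) ?_
  exact Finset.sum_nonneg fun u _ => Finset.sum_nonneg fun w _ => term_nonneg c hpos z u w

private lemma lap_quad_zero {V : Type*} [Fintype V] [DecidableEq V]
    (c : V → V → ℂ) (hsymm : ∀ u v, c u v = c v u) (hloop : ∀ u, c u u = 0)
    (hpos : ∀ u v, c u v ≠ 0 → 0 < (c u v).re) (z : V → ℂ)
    (h0 : (star z ⬝ᵥ (Matrix.of fun u v => if u = v then ∑ w, c u w else -c u v).mulVec z).re = 0) :
    ∀ u w, c u w ≠ 0 → z u = z w := by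
  rw [lap_quad_re c hsymm hloop z] at h0
  have hsum : ∑ u, ∑ w, (c u w).re * Complex.normSq (z u - z w) = 0 := by linarith
  have houter := (Finset.sum_eq_zero_iff_of_nonneg fun u _ =>
    Finset.sum_nonneg fun w _ => term_nonneg c hpos z u w).mp hsum
  intro u w hc
  have hinner := (Finset.sum_eq_zero_iff_of_nonneg fun w _ =>
    term_nonneg c hpos z u w).mp (houter u (Finset.mem_univ u))
  have := hinner w (Finset.mem_univ w)
  have hns : Complex.normSq (z u - z w) = 0 := by
    rcases mul_eq_zero.mp this with h | h
    · exact absurd h (ne_of_gt (hpos u w hc))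
    · exact h
  exact sub_eq_zero.mp (Complex.normSq_eq_zero.mp hns)


theorem response_real_part_posSemidef {b n : ℕ} (hb : 0 < b) (hn : 0 < n)
    (c : (Fin b ⊕ Fin n) → (Fin b ⊕ Fin n) → ℂ)
    (hsymm : ∀ u v, c u v = c v u)
    (hloop : ∀ u, c u u = 0)
    (hpos : ∀ u v, c u v ≠ 0 → 0 < (c u v).re)
    (hconn : (SimpleGraph.fromRel fun u v => c u v ≠ 0).Connected)
    (L : Matrix (Fin b ⊕ Fin n) (Fin b ⊕ Fin n) ℂ)
    (hL : L = Matrix.of fun u v => if u = v then ∑ w, c u w else -c u v)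
    (A : Matrix (Fin b) (Fin b) ℂ) (hA : A = Matrix.of fun i j => L (Sum.inl i) (Sum.inl j))
    (B : Matrix (Fin b) (Fin n) ℂ) (hB : B = Matrix.of fun i j => L (Sum.inl i) (Sum.inr j))
    (C : Matrix (Fin n) (Fin n) ℂ) (hC : C = Matrix.of fun i j => L (Sum.inr i) (Sum.inr j)) :
    ∀ x : Fin b → ℝ,
      0 ≤ ((fun i => (x i : ℂ)) ⬝ᵥ (A - B * C⁻¹ * Bᵀ).mulVec fun i => (x i : ℂ)).re := by
  intro x
  -- C is invertible
  have hCdet : C.det ≠ 0 := by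
    intro hdet
    obtain ⟨v, hv, hCv⟩ := (Matrix.exists_mulVec_eq_zero_iff).mpr hdet
    set z : Fin b ⊕ Fin n → ℂ := Sum.elim 0 v with hzdef
    have hz0 : star z ⬝ᵥ L.mulVec z = 0 := by
      rw [dotProduct, Fintype.sum_sum_type]
      have h1 : ∀ i : Fin b, star z (Sum.inl i) * L.mulVec z (Sum.inl i) = 0 := by
        intro i; simp [hzdef]
      have h2 : ∀ j : Fin n, star z (Sum.inr j) * L.mulVec z (Sum.inr j) = 0 := by
        intro j
        have : L.mulVec z (Sum.inr j) = C.mulVec v j := by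
          rw [mulVec, dotProduct, Fintype.sum_sum_type, mulVec, dotProduct]
          simp [hzdef, hC]
        rw [this, hCv]
        simp
      simp only [h1, h2, Finset.sum_const_zero, add_zero]
    have hzconst : ∀ u w, c u w ≠ 0 → z u = z w := by
      apply lap_quad_zero c hsymm hloop hpos z
      rw [← hL, hz0]
      simp
    have hwalk : ∀ u w, (SimpleGraph.fromRel fun u v => c u v ≠ 0).Reachable u w → z u = z w := by
      intro u w hr
      obtain ⟨p⟩ := hr
      induction p with
      | nil => rfl
      | cons h q ih =>
        obtain ⟨-, h | h⟩ := h
        · exact (hzconst _ _ h).trans ih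
        · exact ((hzconst _ _ h).symm).trans ih
    apply hv
    funext k
    have := hwalk (Sum.inr k) (Sum.inl ⟨0, hb⟩) (hconn.preconnected _ _)
    simpa [hzdef] using this
  have hCinv : C * C⁻¹ = 1 := mul_nonsing_inv C (isUnit_iff_ne_zero.mpr hCdet)
  set xc : Fin b → ℂ := fun i => (x i : ℂ) with hxc
  set y : Fin n → ℂ := -(C⁻¹.mulVec (Bᵀ.mulVec xc)) with hy
  set z : Fin b ⊕ Fin n → ℂ := Sum.elim xc y with hz
  have hLsym : ∀ u v, L u v = L v u := by
    intro u v
    rcases eq_or_ne u v with h | h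
    · rw [h]
    · rw [hL]; simp only [of_apply, if_neg h, if_neg (Ne.symm h), hsymm]
  have hBt : ∀ j i, L (Sum.inr j) (Sum.inl i) = Bᵀ j i := by
    intro j i; rw [transpose_apply, hB, of_apply, hLsym]
  -- interior rows of L z vanish
  have hint : ∀ j : Fin n, L.mulVec z (Sum.inr j) = 0 := by
    intro j
    have : L.mulVec z (Sum.inr j) = Bᵀ.mulVec xc j + C.mulVec y j := by
      rw [mulVec, dotProduct, Fintype.sum_sum_type, mulVec, mulVec, dotProduct, dotProduct]
      congr 1
      · exact Finset.sum_congr rfl fun i _ => by rw [hBt]; rfl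
      · exact Finset.sum_congr rfl fun k _ => by rw [hC]; rfl
    rw [this, hy, mulVec_neg, mulVec_mulVec, hCinv, one_mulVec]
    simp
  -- boundary rows
  have hbd : ∀ i : Fin b, L.mulVec z (Sum.inl i) = A.mulVec xc i + B.mulVec y i := by
    intro i
    rw [mulVec, dotProduct, Fintype.sum_sum_type, mulVec, mulVec, dotProduct, dotProduct]
    congr 1
    · exact Finset.sum_congr rfl fun k _ => by rw [hA]; rfl
    · exact Finset.sum_congr rfl fun k _ => by rw [hB]; rfl
  -- the key identity
  have hkey : (xc ⬝ᵥ (A - B * C⁻¹ * Bᵀ).mulVec xc) = star z ⬝ᵥ L.mulVec z := by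
    have hRx : (A - B * C⁻¹ * Bᵀ).mulVec xc = A.mulVec xc + B.mulVec y := by
      rw [sub_mulVec, ← mulVec_mulVec, ← mulVec_mulVec, hy, mulVec_neg]
      ring_nf
    rw [hRx, dotProduct, dotProduct, Fintype.sum_sum_type]
    have : ∀ j : Fin n, star z (Sum.inr j) * L.mulVec z (Sum.inr j) = 0 := by
      intro j; rw [hint]; simp
    simp only [this, Finset.sum_const_zero, add_zero]
    refine Finset.sum_congr rfl fun i _ => ?_
    rw [hbd]
    simp [hz, hxc, Complex.star_def, Complex.conj_ofReal]
  rw [hkey, hL]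
  exact lap_quad_re_nonneg c hsymm hloop hpos z
end

section
/- Let L be the Laplace matrix of a connected network with complex conductances of positive real part, with b ≥ 2 boundary nodes and n ≥ 1 interior nodes, and let R = A - B C⁻¹ B^T be the response matrix, S = Re R. If x ∈ ℝ^b satisfies S·x = 0, then x is a constant vector. -/
open Matrix

lemma aux_quad {V : Type*} [Fintype V] [DecidableEq V]
    (c : V → V → ℂ) (hsymm : ∀ u v, c u v = c v u) (hloop : ∀ u, c u u = 0)
    (L : Matrix V V ℂ)
    (hL : L = Matrix.of fun u v => if u = v then ∑ w, c u w else -c u v)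
    (v : V → ℂ) :
    (star v ⬝ᵥ L.mulVec v) + (star v ⬝ᵥ L.mulVec v)
      = ∑ u, ∑ w, c u w * (Complex.normSq (v u - v w) : ℂ) := by
  have hT : star v ⬝ᵥ L.mulVec v
      = ∑ u, ∑ w, c u w * ((starRingEnd ℂ) (v u)) * (v u - v w) := by
    subst hL
    simp only [dotProduct, mulVec, Pi.star_apply, of_apply, RCLike.star_def]
    refine Finset.sum_congr rfl fun u _ => ?_
    have hrow : ∀ w : V, (if u = w then ∑ x, c u x else -c u w) * v w
        = (if u = w then (∑ x, c u x) * v u else 0) + (-c u w) * v w := by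
      intro w
      by_cases h : u = w
      · subst h; simp [hloop]
      · simp [h]
    rw [Finset.sum_congr rfl (fun w _ => hrow w), Finset.sum_add_distrib,
      Finset.sum_ite_eq]
    simp only [Finset.mem_univ, if_true]
    rw [mul_add, Finset.sum_mul, Finset.mul_sum, Finset.mul_sum,
      ← Finset.sum_add_distrib]
    exact Finset.sum_congr rfl fun w _ => by ring
  rw [hT]
  nth_rewrite 2 [Finset.sum_comm]
  rw [← Finset.sum_add_distrib]
  refine Finset.sum_congr rfl fun u _ => ?_
  rw [← Finset.sum_add_distrib]
  refine Finset.sum_congr rfl fun w _ => ?_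
  rw [hsymm w u, Complex.normSq_eq_conj_mul_self, map_sub]
  ring

lemma aux_energy {V : Type*} [Fintype V] [DecidableEq V]
    (c : V → V → ℂ) (hsymm : ∀ u v, c u v = c v u) (hloop : ∀ u, c u u = 0)
    (hpos : ∀ u v, c u v ≠ 0 → 0 < (c u v).re)
    (L : Matrix V V ℂ)
    (hL : L = Matrix.of fun u v => if u = v then ∑ w, c u w else -c u v)
    (v : V → ℂ) (h0 : (star v ⬝ᵥ L.mulVec v).re = 0) :
    ∀ u w, c u w ≠ 0 → v u = v w := by
  have hq := aux_quad c hsymm hloop L hL v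
  have hre : (0 : ℝ) = ∑ u, ∑ w, (c u w).re * Complex.normSq (v u - v w) := by
    have h := congrArg Complex.re hq
    rw [Complex.add_re, h0, add_zero, Complex.re_sum] at h
    rw [← h.symm]
    refine Finset.sum_congr rfl fun u _ => ?_
    rw [Complex.re_sum]
    refine Finset.sum_congr rfl fun w _ => ?_
    simp [Complex.mul_re]
  have hnn : ∀ u w, 0 ≤ (c u w).re * Complex.normSq (v u - v w) := by
    intro u w
    by_cases h : c u w = 0
    · simp [h]
    · exact mul_nonneg (hpos u w h).le (Complex.normSq_nonneg _)
  have key : ∀ u w, (c u w).re * Complex.normSq (v u - v w) = 0 := by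
    intro u w
    have h1 := (Finset.sum_eq_zero_iff_of_nonneg
      (fun u _ => Finset.sum_nonneg fun w _ => hnn u w)).mp hre.symm u (Finset.mem_univ u)
    exact (Finset.sum_eq_zero_iff_of_nonneg (fun w _ => hnn u w)).mp h1 w (Finset.mem_univ w)
  intro u w hc
  have hzero : Complex.normSq (v u - v w) = 0 := by
    rcases mul_eq_zero.mp (key u w) with h | h
    · exact absurd h (hpos u w hc).ne'
    · exact h
  exact sub_eq_zero.mp (Complex.normSq_eq_zero.mp hzero)

lemma aux_const {V : Type*} (c : V → V → ℂ)
    (hconn : (SimpleGraph.fromRel fun u v => c u v ≠ 0).Connected)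
    (v : V → ℂ) (hedge : ∀ u w, c u w ≠ 0 → v u = v w) :
    ∀ u w, v u = v w := by
  have hwalk : ∀ {a b : V} (_ : (SimpleGraph.fromRel fun u v => c u v ≠ 0).Walk a b),
      v a = v b := by
    intro a b p
    induction p with
    | nil => rfl
    | @cons x y z h _ ih =>
      rcases ((SimpleGraph.fromRel_adj _ x y).mp h).2 with h' | h'
      · exact (hedge x y h').trans ih
      · exact ((hedge y x h').symm).trans ih
  intro u w
  obtain ⟨p⟩ := hconn.preconnected u w
  exact hwalk p


theorem response_real_part_kernel_constant {b n : ℕ} (hb : 2 ≤ b) (hn : 0 < n)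
    (c : (Fin b ⊕ Fin n) → (Fin b ⊕ Fin n) → ℂ)
    (hsymm : ∀ u v, c u v = c v u)
    (hloop : ∀ u, c u u = 0)
    (hpos : ∀ u v, c u v ≠ 0 → 0 < (c u v).re)
    (hconn : (SimpleGraph.fromRel fun u v => c u v ≠ 0).Connected)
    (L : Matrix (Fin b ⊕ Fin n) (Fin b ⊕ Fin n) ℂ)
    (hL : L = Matrix.of fun u v => if u = v then ∑ w, c u w else -c u v)
    (A : Matrix (Fin b) (Fin b) ℂ) (hA : A = Matrix.of fun i j => L (Sum.inl i) (Sum.inl j))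
    (B : Matrix (Fin b) (Fin n) ℂ) (hB : B = Matrix.of fun i j => L (Sum.inl i) (Sum.inr j))
    (C : Matrix (Fin n) (Fin n) ℂ) (hC : C = Matrix.of fun i j => L (Sum.inr i) (Sum.inr j))
    (S : Matrix (Fin b) (Fin b) ℝ)
    (hS : S = Matrix.of fun i j => ((A - B * C⁻¹ * Bᵀ) i j).re) :
    ∀ x : Fin b → ℝ, S.mulVec x = 0 → ∃ k : ℝ, x = fun _ => k := by
  have i0 : Fin b := ⟨0, by omega⟩
  -- C is invertible
  have hdet : IsUnit C.det := by
    rw [isUnit_iff_ne_zero]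
    intro hd
    obtain ⟨y, hy0, hCy⟩ := (Matrix.exists_mulVec_eq_zero_iff).mpr hd
    set v : (Fin b ⊕ Fin n) → ℂ := Sum.elim 0 y with hv
    have hLv : ∀ i, (L.mulVec v) (Sum.inr i) = 0 := by
      intro i
      have : (L.mulVec v) (Sum.inr i) = (C.mulVec y) i := by
        simp only [mulVec, dotProduct, Fintype.sum_sum_type, hv, Sum.elim_inl,
          Sum.elim_inr, Pi.zero_apply, mul_zero, Finset.sum_const_zero, zero_add, hC,
          of_apply]
      rw [this, hCy]; rfl
    have h0 : (star v ⬝ᵥ L.mulVec v).re = 0 := by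
      have : star v ⬝ᵥ L.mulVec v = 0 := by
        rw [dotProduct, Fintype.sum_sum_type]
        rw [Finset.sum_eq_zero fun i _ => by simp [hv], Finset.sum_eq_zero fun i _ => by
          rw [hLv i, mul_zero], add_zero]
      rw [this]; rfl
    have hcst := aux_const c hconn v
      (aux_energy c hsymm hloop hpos L hL v h0)
    apply hy0
    funext i
    have := hcst (Sum.inr i) (Sum.inl i0)
    simpa [hv] using this
  intro x hx
  set xc : Fin b → ℂ := fun i => (x i : ℂ) with hxc
  set y : Fin n → ℂ := -(C⁻¹.mulVec (Bᵀ.mulVec xc)) with hy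
  set v : (Fin b ⊕ Fin n) → ℂ := Sum.elim xc y with hv
  have hLsym : ∀ u w, L u w = L w u := by
    intro u w
    rw [hL]
    simp only [of_apply]
    by_cases h : u = w
    · subst h; rfl
    · rw [if_neg h, if_neg (Ne.symm h), hsymm]
  have hLinr : ∀ i, (L.mulVec v) (Sum.inr i) = 0 := by
    intro i
    have h1 : (L.mulVec v) (Sum.inr i) = (Bᵀ.mulVec xc) i + (C.mulVec y) i := by
      simp only [mulVec, dotProduct, Fintype.sum_sum_type, hv, Sum.elim_inl, Sum.elim_inr]
      congr 1
      · refine Finset.sum_congr rfl fun j _ => ?_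
        rw [transpose_apply, hB, of_apply, hLsym]
      · refine Finset.sum_congr rfl fun j _ => ?_
        rw [hC, of_apply]
    rw [h1, hy]
    have : C.mulVec (-(C⁻¹.mulVec (Bᵀ.mulVec xc))) = -(Bᵀ.mulVec xc) := by
      rw [Matrix.mulVec_neg, Matrix.mulVec_mulVec, Matrix.mul_nonsing_inv C hdet,
        Matrix.one_mulVec]
    rw [this]
    simp
  have hLinl : ∀ i, (L.mulVec v) (Sum.inl i) = ((A - B * C⁻¹ * Bᵀ).mulVec xc) i := by
    intro i
    have h1 : (L.mulVec v) (Sum.inl i) = (A.mulVec xc) i + (B.mulVec y) i := by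
      simp only [mulVec, dotProduct, Fintype.sum_sum_type, hv, Sum.elim_inl, Sum.elim_inr]
      congr 1
      · exact Finset.sum_congr rfl fun j _ => by rw [hA, of_apply]
      · exact Finset.sum_congr rfl fun j _ => by rw [hB, of_apply]
    rw [h1, hy, Matrix.mulVec_neg, Matrix.mulVec_mulVec, Matrix.mulVec_mulVec]
    have : (A - B * C⁻¹ * Bᵀ).mulVec xc = A.mulVec xc - (B * C⁻¹ * Bᵀ).mulVec xc :=
      Matrix.sub_mulVec _ _ _
    rw [this, Matrix.mul_assoc]
    simp [sub_eq_add_neg, Matrix.mulVec_mulVec]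
  have hSx : ∀ i, (((A - B * C⁻¹ * Bᵀ).mulVec xc) i).re = 0 := by
    intro i
    have h2 : (((A - B * C⁻¹ * Bᵀ).mulVec xc) i).re = (S.mulVec x) i := by
      rw [hS]
      simp only [mulVec, dotProduct, Complex.re_sum, of_apply]
      refine Finset.sum_congr rfl fun j _ => ?_
      simp [hxc, Complex.mul_re]
    rw [h2, hx]; rfl
  have h0 : (star v ⬝ᵥ L.mulVec v).re = 0 := by
    have hdp : star v ⬝ᵥ L.mulVec v
        = ∑ i : Fin b, star v (Sum.inl i) * (L.mulVec v) (Sum.inl i) := by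
      rw [dotProduct, Fintype.sum_sum_type,
        show (∑ a₂ : Fin n, star v (Sum.inr a₂) * (L.mulVec v) (Sum.inr a₂)) = 0 from
          Finset.sum_eq_zero fun i _ => by rw [hLinr i, mul_zero], add_zero]
    rw [hdp, Complex.re_sum]
    refine Finset.sum_eq_zero fun i _ => ?_
    have hst : star v (Sum.inl i) = (x i : ℂ) := by
      simp [hv, hxc, Pi.star_apply, RCLike.star_def, Complex.conj_ofReal]
    rw [hst, hLinl i, Complex.mul_re]
    have := hSx i
    simp only [Complex.ofReal_re, Complex.ofReal_im, this, mul_zero, zero_mul, sub_zero]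
  have hcst := aux_const c hconn v (aux_energy c hsymm hloop hpos L hL v h0)
  refine ⟨x i0, funext fun i => ?_⟩
  have := hcst (Sum.inl i) (Sum.inl i0)
  simp only [hv, Sum.elim_inl, hxc] at this
  exact_mod_cast this
end

section
/- For a connected network with complex symmetric conductance c_{uv} (Re c_{uv} > 0) and a nonempty set of boundary nodes, for any assignment of complex voltages to the boundary nodes there exists a unique extension of the voltage function to all nodes satisfying the equilibrium condition ∑_{w} c_{uw}(V_u - V_w) = 0 at every interior node u. -/
open Matrix

open Complex in
private lemma equilibrium_key_zero {V : Type*} [Fintype V] [DecidableEq V]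
    (c : V → V → ℂ)
    (hsymm : ∀ u v, c u v = c v u)
    (hpos : ∀ u v, c u v ≠ 0 → 0 < (c u v).re)
    (hconn : (SimpleGraph.fromRel fun u v => c u v ≠ 0).Connected)
    (Bd : Set V) (hBd : Bd.Nonempty) (f : V → ℂ)
    (hb : ∀ u ∈ Bd, f u = 0)
    (he : ∀ u ∉ Bd, ∑ w, c u w * (f u - f w) = 0) : f = 0 := by
  classical
  set S : ℂ := ∑ u, ∑ w, c u w * (starRingEnd ℂ) (f u) * (f u - f w) with hS
  have hS0 : S = 0 := by
    apply Finset.sum_eq_zero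
    intro u _
    by_cases hu : u ∈ Bd
    · simp [hb u hu]
    · have h1 : ∑ w, c u w * (starRingEnd ℂ) (f u) * (f u - f w)
          = (starRingEnd ℂ) (f u) * ∑ w, c u w * (f u - f w) := by
        rw [Finset.mul_sum]
        exact Finset.sum_congr rfl fun w _ => by ring
      rw [h1, he u hu, mul_zero]
  have hswap : S = ∑ u, ∑ w, c u w * (starRingEnd ℂ) (f w) * (f w - f u) := by
    rw [hS, Finset.sum_comm]
    exact Finset.sum_congr rfl fun u _ => Finset.sum_congr rfl fun w _ => by rw [hsymm w u]
  have hkey : ∑ u, ∑ w, c u w * ((starRingEnd ℂ) (f u - f w) * (f u - f w)) = 0 := by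
    have h2 : S + S = ∑ u, ∑ w, c u w * ((starRingEnd ℂ) (f u - f w) * (f u - f w)) := by
      nth_rewrite 1 [hS]
      nth_rewrite 1 [hswap]
      rw [← Finset.sum_add_distrib]
      refine Finset.sum_congr rfl fun u _ => ?_
      rw [← Finset.sum_add_distrib]
      refine Finset.sum_congr rfl fun w _ => ?_
      simp only [map_sub]
      ring
    rw [← h2, hS0, add_zero]
  have hre : ∑ u, ∑ w, (c u w).re * Complex.normSq (f u - f w) = 0 := by
    have := congrArg Complex.re hkey
    simp only [Complex.re_sum, Complex.zero_re] at this
    rw [← this]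
    refine Finset.sum_congr rfl fun u _ => Finset.sum_congr rfl fun w _ => ?_
    rw [show (starRingEnd ℂ) (f u - f w) * (f u - f w)
        = ((Complex.normSq (f u - f w) : ℝ) : ℂ) from by
      rw [mul_comm, Complex.mul_conj]]
    simp [Complex.mul_re]
  have hnonneg : ∀ u w : V, 0 ≤ (c u w).re * Complex.normSq (f u - f w) := by
    intro u w
    by_cases h : c u w = 0
    · simp [h]
    · exact mul_nonneg (le_of_lt (hpos u w h)) (Complex.normSq_nonneg _)
  have hterm : ∀ u w : V, (c u w).re * Complex.normSq (f u - f w) = 0 := by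
    intro u w
    have houter := (Finset.sum_eq_zero_iff_of_nonneg
      (fun u _ => Finset.sum_nonneg fun w _ => hnonneg u w)).mp hre u (Finset.mem_univ u)
    exact (Finset.sum_eq_zero_iff_of_nonneg (fun w _ => hnonneg u w)).mp
      houter w (Finset.mem_univ w)
  have hadj : ∀ u w : V, c u w ≠ 0 → f u = f w := by
    intro u w h
    have := hterm u w
    have hne : (c u w).re ≠ 0 := ne_of_gt (hpos u w h)
    have : Complex.normSq (f u - f w) = 0 := by
      rcases mul_eq_zero.mp this with h' | h'
      · exact absurd h' hne
      · exact h'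
    have := Complex.normSq_eq_zero.mp this
    exact sub_eq_zero.mp this
  have hconst : ∀ u v : V, f u = f v := by
    intro u v
    obtain ⟨p⟩ := (hconn u v)
    induction p with
    | nil => rfl
    | @cons a b w h p ih =>
      have hab : f a = f b := by
        rcases (SimpleGraph.fromRel_adj _ _ _).mp h with ⟨_, h' | h'⟩
        · exact hadj a b h'
        · exact hadj a b (by rw [hsymm]; exact h')
      rw [hab]; exact ih
  obtain ⟨b, hbmem⟩ := hBd
  funext u
  rw [hconst u b, hb b hbmem]
  rfl

theorem equilibrium_voltage_exists_unique {V : Type*} [Fintype V] [DecidableEq V]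
    (c : V → V → ℂ)
    (hsymm : ∀ u v, c u v = c v u)
    (hloop : ∀ u, c u u = 0)
    (hpos : ∀ u v, c u v ≠ 0 → 0 < (c u v).re)
    (hconn : (SimpleGraph.fromRel fun u v => c u v ≠ 0).Connected)
    (Bd : Set V) (hBd : Bd.Nonempty)
    (g : V → ℂ) :
    ∃! f : V → ℂ,
      (∀ u ∈ Bd, f u = g u) ∧
      (∀ u ∉ Bd, ∑ w, c u w * (f u - f w) = 0) := by
  classical
  set T : (V → ℂ) →ₗ[ℂ] (V → ℂ) :=
    { toFun := fun f u => if u ∈ Bd then f u else ∑ w, c u w * (f u - f w)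
      map_add' := by
        intro f₁ f₂
        funext u
        by_cases hu : u ∈ Bd
        · simp [hu]
        · simp only [hu, if_false, Pi.add_apply, ← Finset.sum_add_distrib]
          exact Finset.sum_congr rfl fun w _ => by ring
      map_smul' := by
        intro a f₁
        funext u
        by_cases hu : u ∈ Bd
        · simp [hu]
        · simp only [hu, if_false, Pi.smul_apply, smul_eq_mul, RingHom.id_apply,
            Finset.mul_sum]
          exact Finset.sum_congr rfl fun w _ => by ring } with hT
  have hinj : Function.Injective T := by
    rw [← LinearMap.ker_eq_bot, LinearMap.ker_eq_bot']
    intro f hf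
    apply equilibrium_key_zero c hsymm hpos hconn Bd hBd f
    · intro u hu
      have := congrFun hf u
      simpa [hT, hu] using this
    · intro u hu
      have := congrFun hf u
      simpa [hT, hu] using this
  have hsurj : Function.Surjective T := LinearMap.injective_iff_surjective.mp hinj
  obtain ⟨f, hf⟩ := hsurj (fun u => if u ∈ Bd then g u else 0)
  have hprop : ∀ h : V → ℂ,
      ((∀ u ∈ Bd, h u = g u) ∧ (∀ u ∉ Bd, ∑ w, c u w * (h u - h w) = 0)) ↔
      T h = fun u => if u ∈ Bd then g u else 0 := by
    intro h
    constructor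
    · rintro ⟨h1, h2⟩
      funext u
      by_cases hu : u ∈ Bd
      · simp [hT, hu, h1 u hu]
      · simp [hT, hu, h2 u hu]
    · intro heq
      constructor
      · intro u hu
        have := congrFun heq u
        simpa [hT, hu] using this
      · intro u hu
        have := congrFun heq u
        simpa [hT, hu] using this
  refine ⟨f, (hprop f).mpr hf, ?_⟩
  intro f' hf'
  exact hinj (by rw [hf, ← (hprop f').mp hf'])
end

section
/- Every complex symmetric b×b matrix Λ (b ≥ 2) with zero row sums, positive semidefinite real part, and real part whose kernel is exactly the constant vectors, is the response matrix of a connected alternating-current network with b boundary nodes and at most max(b-2, 0) interior nodes, all of whose conductances have positive real part. -/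
open Matrix
open scoped BigOperators

lemma spectral_package {b : ℕ} (hb : 2 ≤ b) (R : Matrix (Fin b) (Fin b) ℝ)
    (hpsd : R.PosSemidef)
    (hrow : R *ᵥ (fun _ => (1:ℝ)) = 0)
    (hker : ∀ x : Fin b → ℝ, R *ᵥ x = 0 → ∃ k : ℝ, x = fun _ => k) :
    ∃ μ : ℝ, 0 < μ ∧ ∃ w : Fin (b-2) → Fin b → ℝ,
      (∀ k, ∑ i, w k i = 0) ∧
      (∀ i j, i ≠ j → ∑ k, w k i * w k j = R i j + μ / b) := by
  have hR : R.IsHermitian := hpsd.1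
  set v : Fin b → Fin b → ℝ := fun m => ⇑(hR.eigenvectorBasis m) with hv
  set lam : Fin b → ℝ := hR.eigenvalues with hlam
  have heig : ∀ m, R *ᵥ v m = lam m • v m := fun m => hR.mulVec_eigenvectorBasis m
  -- entrywise spectral theorem
  have hentry : ∀ i j, R i j = ∑ m, lam m * (v m i * v m j) := by
    intro i j
    conv_lhs => rw [hR.spectral_theorem, Unitary.conjStarAlgAut_apply]
    rw [Matrix.mul_apply]
    simp only [Matrix.mul_apply, Matrix.diagonal_apply, Function.comp, mul_ite, mul_zero,
      ite_mul, zero_mul, Finset.sum_ite_eq, Finset.sum_ite_eq', Finset.mem_univ, if_true,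
      Matrix.star_apply, star_trivial, Matrix.IsHermitian.eigenvectorUnitary_apply, RCLike.ofReal_real_eq_id, id_eq]
    exact Finset.sum_congr rfl fun m _ => by ring
  -- completeness
  have hcomplete : ∀ i j, ∑ m, v m i * v m j = if i = j then (1:ℝ) else 0 := by
    intro i j
    have h1 : ((hR.eigenvectorUnitary : Matrix (Fin b) (Fin b) ℝ) *
        star (hR.eigenvectorUnitary : Matrix (Fin b) (Fin b) ℝ)) = 1 :=
      (Matrix.mem_unitaryGroup_iff).mp (hR.eigenvectorUnitary).2
    have h2 := congrFun (congrFun h1 i) j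
    rw [Matrix.mul_apply] at h2
    simp only [Matrix.star_apply, star_trivial,
      Matrix.IsHermitian.eigenvectorUnitary_apply, Matrix.one_apply] at h2
    exact h2
  -- orthonormality
  have horth : ∀ m m', m ≠ m' → ∑ i, v m i * v m' i = 0 := by
    intro m m' hmm
    have h4 : inner (𝕜 := ℝ) (hR.eigenvectorBasis m) (hR.eigenvectorBasis m') = (0:ℝ) :=
      hR.eigenvectorBasis.orthonormal.2 hmm
    rw [PiLp.inner_apply] at h4
    have h5 : ∑ x, (hR.eigenvectorBasis m').ofLp x * (hR.eigenvectorBasis m).ofLp x = 0 := by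
      simpa using h4
    rw [← h5]; exact Finset.sum_congr rfl fun i _ => mul_comm _ _
  have hnorm : ∀ m, ∑ i, v m i * v m i = 1 := by
    intro m
    have h2 := hR.eigenvectorBasis.orthonormal.1 m
    have h3 : inner (𝕜 := ℝ) (hR.eigenvectorBasis m) (hR.eigenvectorBasis m) = (1:ℝ) := by
      rw [real_inner_self_eq_norm_sq, h2]; norm_num
    rw [PiLp.inner_apply] at h3
    have h5 : ∑ x, (hR.eigenvectorBasis m).ofLp x ^ 2 = 1 := by simpa using h3
    rw [← h5]; exact Finset.sum_congr rfl fun i _ => (sq _).symm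
  have hlamnn : ∀ m, 0 ≤ lam m := hpsd.eigenvalues_nonneg
  have hRsym : ∀ i j, R i j = R j i := by
    intro i j
    conv_lhs => rw [← hR]
    simp [Matrix.conjTranspose_apply]
  have hrowR : ∀ i, ∑ j, R i j = 0 := by
    intro i
    have := congrFun hrow i
    simpa [Matrix.mulVec, dotProduct] using this
  have hsumv : ∀ m, lam m ≠ 0 → ∑ i, v m i = 0 := by
    intro m hm
    have h1 : lam m * ∑ i, v m i = 0 := by
      rw [Finset.mul_sum]
      have : ∀ i, lam m * v m i = (R *ᵥ v m) i := by
        intro i; rw [heig m]; rfl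
      rw [Finset.sum_congr rfl fun i _ => this i]
      show ∑ i, ∑ j, R i j * v m j = 0
      rw [Finset.sum_comm]
      have : ∀ j, ∑ i, R i j * v m j = 0 := by
        intro j
        rw [← Finset.sum_mul]
        have : ∑ i, R i j = 0 := by
          rw [Finset.sum_congr rfl fun i _ => (hRsym i j)]
          exact hrowR j
        rw [this, zero_mul]
      rw [Finset.sum_congr rfl fun j _ => this j, Finset.sum_const, smul_zero]
    exact (mul_eq_zero.mp h1).resolve_left hm
  -- existence of zero eigenvalue
  have hone : (fun _ => (1:ℝ)) ≠ (0 : Fin b → ℝ) := by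
    intro h
    have := congrFun h ⟨0, by omega⟩
    simp at this
  have hdet : R.det = 0 := by
    rw [← Matrix.exists_mulVec_eq_zero_iff]
    exact ⟨fun _ => 1, hone, hrow⟩
  obtain ⟨m0, -, hm0⟩ : ∃ m0 ∈ Finset.univ, lam m0 = 0 := by
    have := hR.det_eq_prod_eigenvalues
    rw [hdet] at this
    have := (Finset.prod_eq_zero_iff).mp this.symm
    obtain ⟨m0, hm0u, hm0⟩ := this
    exact ⟨m0, hm0u, by simpa using hm0⟩
  -- v m0 is constant
  obtain ⟨k0, hk0⟩ : ∃ k0, v m0 = fun _ => k0 := by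
    apply hker
    rw [heig m0, hm0, zero_smul]
  have hk0sq : (b : ℝ) * (k0 * k0) = 1 := by
    have := hnorm m0
    rw [hk0] at this
    simpa [Finset.sum_const, Fintype.card_fin] using this
  have hk0ne : k0 ≠ 0 := by
    intro h
    rw [h] at hk0sq
    simp at hk0sq
  have hbR : (0:ℝ) < (b:ℝ) := by positivity
  -- positivity of other eigenvalues
  have hpos : ∀ m, m ≠ m0 → 0 < lam m := by
    intro m hm
    rcases (hlamnn m).lt_or_eq with h | h
    · exact h
    · exfalso
      obtain ⟨k, hk⟩ : ∃ k, v m = fun _ => k := by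
        apply hker
        rw [heig m, ← h, zero_smul]
      have ho := horth m m0 hm
      rw [hk, hk0] at ho
      have hsum : (b:ℝ) * (k * k0) = 0 := by
        simpa [Finset.sum_const, Fintype.card_fin] using ho
      have hk' : k = 0 := by
        rcases mul_eq_zero.mp hsum with h' | h'
        · exact absurd h' (by positivity)
        · exact (mul_eq_zero.mp h').resolve_right hk0ne
      have := hnorm m
      rw [hk, hk'] at this
      simp at this
  -- minimum eigenvalue on the complement of m0
  have hTne : (Finset.univ.erase m0).Nonempty := by
    obtain ⟨m', hm'⟩ := Fintype.exists_ne_of_one_lt_card (by simp; omega) m0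
    exact ⟨m', Finset.mem_erase.mpr ⟨hm', Finset.mem_univ _⟩⟩
  obtain ⟨m1, hm1T, hmin⟩ := Finset.exists_min_image (Finset.univ.erase m0) lam hTne
  have hm1ne : m1 ≠ m0 := (Finset.mem_erase.mp hm1T).1
  set μ := lam m1 with hμ
  have hμpos : 0 < μ := hpos m1 hm1ne
  refine ⟨μ, hμpos, ?_⟩
  -- the index set K and enumeration
  set K := (Finset.univ.erase m0).erase m1 with hK
  have hKcard : K.card = b - 2 := by
    rw [hK, Finset.card_erase_of_mem hm1T, Finset.card_erase_of_mem (Finset.mem_univ m0)]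
    simp only [Finset.card_univ, Fintype.card_fin]
    omega
  have hKm0 : ∀ m ∈ K, m ≠ m0 := fun m hm =>
    (Finset.mem_erase.mp (Finset.mem_of_mem_erase hm)).1
  have hKmin : ∀ m ∈ K, μ ≤ lam m := fun m hm => hmin m (Finset.mem_of_mem_erase hm)
  -- enumeration of K
  let e : Fin (b-2) ≃ {x // x ∈ K} := (finCongr hKcard.symm).trans K.equivFin.symm
  -- the vectors
  refine ⟨fun k i => Real.sqrt (lam (e k) - μ) * v (e k) i, ?_, ?_⟩
  · intro k
    rw [← Finset.mul_sum, hsumv (e k) (ne_of_gt (hpos (e k) (hKm0 _ (e k).2))), mul_zero]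
  · intro i j hij
    have hsq : ∀ k : Fin (b-2),
        (Real.sqrt (lam (e k) - μ) * v (e k) i) * (Real.sqrt (lam (e k) - μ) * v (e k) j)
          = (lam (e k) - μ) * (v (e k) i * v (e k) j) := by
      intro k
      have h1 : Real.sqrt (lam (e k) - μ) * Real.sqrt (lam (e k) - μ) = lam (e k) - μ :=
        Real.mul_self_sqrt (by linarith [hKmin (e k) (e k).2])
      calc _ = (Real.sqrt (lam (e k) - μ) * Real.sqrt (lam (e k) - μ)) *
          (v (e k) i * v (e k) j) := by ring
        _ = _ := by rw [h1]
    rw [Finset.sum_congr rfl fun k _ => hsq k]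
    -- transport the sum to a sum over K
    have hbij : ∑ k : Fin (b-2), (lam (e k) - μ) * (v (e k) i * v (e k) j)
        = ∑ m ∈ K, (lam m - μ) * (v m i * v m j) := by
      rw [← Finset.sum_coe_sort K (fun m => (lam m - μ) * (v m i * v m j))]
      exact Equiv.sum_comp e (fun x => (lam x.1 - μ) * (v x.1 i * v x.1 j))
    rw [hbij]
    -- now the spectral computation
    have hsplit1 : ∑ m, lam m * (v m i * v m j)
        = lam m0 * (v m0 i * v m0 j) + ∑ m ∈ Finset.univ.erase m0, lam m * (v m i * v m j) :=
      (Finset.add_sum_erase _ _ (Finset.mem_univ m0)).symm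
    have hsplit2 : ∑ m ∈ Finset.univ.erase m0, lam m * (v m i * v m j)
        = lam m1 * (v m1 i * v m1 j) + ∑ m ∈ K, lam m * (v m i * v m j) :=
      (Finset.add_sum_erase _ _ hm1T).symm
    have hsplitc1 : ∑ m, v m i * v m j
        = v m0 i * v m0 j + ∑ m ∈ Finset.univ.erase m0, v m i * v m j :=
      (Finset.add_sum_erase _ _ (Finset.mem_univ m0)).symm
    have hsplitc2 : ∑ m ∈ Finset.univ.erase m0, v m i * v m j
        = v m1 i * v m1 j + ∑ m ∈ K, v m i * v m j :=
      (Finset.add_sum_erase _ _ hm1T).symm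
    have hCij : ∑ m, v m i * v m j = 0 := by rw [hcomplete i j, if_neg hij]
    have hKsum : ∑ m ∈ K, (lam m - μ) * (v m i * v m j)
        = ∑ m ∈ K, lam m * (v m i * v m j) - μ * ∑ m ∈ K, v m i * v m j := by
      rw [Finset.mul_sum, ← Finset.sum_sub_distrib]
      exact Finset.sum_congr rfl fun m _ => by ring
    have hv0ij : v m0 i * v m0 j = k0 * k0 := by rw [hk0]
    have hk0sq' : k0 * k0 = 1 / b := by
      field_simp at hk0sq ⊢
      linarith [hk0sq]
    rw [hKsum]
    have hRij := hentry i j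
    -- assemble
    have hKF : ∑ m ∈ K, lam m * (v m i * v m j)
        = R i j - μ * (v m1 i * v m1 j) := by
      rw [hRij, hsplit1, hsplit2, hm0]; ring
    have hKC : ∑ m ∈ K, v m i * v m j = - v m1 i * v m1 j - k0 * k0 := by
      have := hCij
      rw [hsplitc1, hsplitc2, hv0ij] at this
      linarith
    rw [hKF, hKC, hk0sq']
    field_simp
    ring

theorem response_map_characterization_sufficiency {b : ℕ} (hb : 2 ≤ b)
    (Λ : Matrix (Fin b) (Fin b) ℂ)
    (hsymm : Λᵀ = Λ)
    (hrow : Λ.mulVec 1 = 0)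
    (hpsd : ∀ x : Fin b → ℝ,
      0 ≤ ((fun i => (x i : ℂ)) ⬝ᵥ Λ.mulVec fun i => (x i : ℂ)).re)
    (hker : ∀ x : Fin b → ℝ,
      (Matrix.of fun i j => (Λ i j).re).mulVec x = 0 → ∃ k : ℝ, x = fun _ => k) :
    ∃ n : ℕ, n ≤ b - 2 ∧
      ∃ c : (Fin b ⊕ Fin n) → (Fin b ⊕ Fin n) → ℂ,
        (∀ u v, c u v = c v u) ∧
        (∀ u, c u u = 0) ∧
        (∀ u v, c u v ≠ 0 → 0 < (c u v).re) ∧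
        (SimpleGraph.fromRel fun u v => c u v ≠ 0).Connected ∧
        ∃ (A : Matrix (Fin b) (Fin b) ℂ) (B : Matrix (Fin b) (Fin n) ℂ)
          (C : Matrix (Fin n) (Fin n) ℂ),
          A = (Matrix.of fun i j =>
            if (Sum.inl i : Fin b ⊕ Fin n) = Sum.inl j then ∑ w, c (Sum.inl i) w
            else -c (Sum.inl i) (Sum.inl j)) ∧
          B = (Matrix.of fun i j => -c (Sum.inl i) (Sum.inr j)) ∧
          C = (Matrix.of fun i j =>
            if (Sum.inr i : Fin b ⊕ Fin n) = Sum.inr j then ∑ w, c (Sum.inr i) w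
            else -c (Sum.inr i) (Sum.inr j)) ∧
          IsUnit C ∧
          A - B * C⁻¹ * Bᵀ = Λ := by
  classical
  set R : Matrix (Fin b) (Fin b) ℝ := Matrix.of fun i j => (Λ i j).re with hRdef
  have hΛsym : ∀ i j, Λ i j = Λ j i := fun i j => (congrFun (congrFun hsymm i) j).symm
  have hΛrow : ∀ i, ∑ j, Λ i j = 0 := by
    intro i
    have := congrFun hrow i
    simpa [Matrix.mulVec, dotProduct] using this
  have hRrow : R *ᵥ (fun _ => (1:ℝ)) = 0 := by
    funext i
    simp only [Matrix.mulVec, dotProduct, hRdef, Matrix.of_apply, mul_one]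
    rw [← Complex.re_sum, hΛrow i]
    simp
  have hRH : R.IsHermitian := by
    ext i j
    simp only [Matrix.conjTranspose_apply, hRdef, Matrix.of_apply, star_trivial]
    rw [hΛsym i j]
  have hRpsd : R.PosSemidef := by
    refine Matrix.PosSemidef.of_dotProduct_mulVec_nonneg hRH fun x => ?_
    have := hpsd x
    have hre : ((fun i => (x i : ℂ)) ⬝ᵥ Λ.mulVec fun i => (x i : ℂ)).re
        = dotProduct (star x) (R *ᵥ x) := by
      simp only [dotProduct, Matrix.mulVec, Complex.re_sum, star_trivial, Pi.star_apply]
      refine Finset.sum_congr rfl fun i _ => ?_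
      rw [Complex.re_ofReal_mul]
      congr 1
      simp only [hRdef, Matrix.of_apply, Complex.re_sum, Finset.mul_sum, Finset.sum_mul]
      refine Finset.sum_congr rfl fun j _ => ?_
      rw [mul_comm (Λ i j) ((x j : ℂ)), Complex.re_ofReal_mul]
      ring
    rw [hre] at this
    exact this
  obtain ⟨μ, hμpos, w, hwsum, hwprod⟩ := spectral_package hb R hRpsd hRrow hker
  have hb0 : (0:ℝ) < (b:ℝ) := by positivity
  set γ : ℝ := μ / b with hγdef
  set δ : ℝ := μ / (b^2) with hδdef
  set s : ℝ := Real.sqrt γ with hsdef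
  have hγpos : 0 < γ := by positivity
  have hδpos : 0 < δ := by positivity
  have hs2 : s * s = γ := Real.mul_self_sqrt hγpos.le
  have hγC : ((γ:ℝ):ℂ) ≠ 0 := by
    simp only [ne_eq, Complex.ofReal_eq_zero]
    exact hγpos.ne'
  set d : Fin (b-2) → Fin b → ℂ := fun k i => (δ : ℂ) + (s * w k i : ℝ) * Complex.I with hddef
  have hdre : ∀ k i, (d k i).re = δ := by intro k i; simp [hddef]
  have hdne : ∀ k i, d k i ≠ 0 := by
    intro k i h
    have : (d k i).re = 0 := by rw [h]; simp
    rw [hdre] at this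
    exact hδpos.ne' this
  have hdsum : ∀ k, ∑ i, d k i = (γ : ℂ) := by
    intro k
    rw [Finset.sum_add_distrib, Finset.sum_const, ← Finset.sum_mul, ← Complex.ofReal_sum,
      ← Finset.mul_sum, hwsum k, mul_zero]
    simp only [Complex.ofReal_zero, zero_mul, add_zero, Finset.card_univ, Fintype.card_fin,
      nsmul_eq_mul]
    rw [← Complex.ofReal_natCast, ← Complex.ofReal_mul]
    congr 1
    rw [hδdef, hγdef]
    field_simp
  have hprodre : ∀ k i j, (d k i * d k j).re = δ*δ - γ*(w k i * w k j) := by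
    intro k i j
    simp only [hddef, Complex.mul_re, Complex.add_re, Complex.ofReal_re, Complex.mul_im,
      Complex.add_im, Complex.ofReal_im, Complex.I_re, Complex.I_im, Complex.mul_I_re,
      Complex.mul_I_im]
    ring_nf
    have hsγ : s * s = μ / b := by rw [hs2, hγdef]
    linear_combination (-(w k i * w k j)) * hsγ
  set ρ : ℝ := μ/(b:ℝ) - ((b-2:ℕ):ℝ)*(δ*δ)/γ with hρdef
  have hρpos : 0 < ρ := by
    have h1 : (δ*δ)/γ = μ/(b:ℝ)^3 := by
      rw [hδdef, hγdef]
      field_simp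
    have h2 : ((b-2:ℕ):ℝ) < (b:ℝ)^2 := by
      have : (b-2:ℕ) < b^2 := by nlinarith [Nat.sub_le b 2, hb]
      exact_mod_cast this
    have h3 : ((b-2:ℕ):ℝ)*(δ*δ)/γ < (b:ℝ)^2 * (μ/(b:ℝ)^3) := by
      rw [mul_div_assoc, h1]
      exact mul_lt_mul_of_pos_right h2 (by positivity)
    have h4 : (b:ℝ)^2 * (μ/(b:ℝ)^3) = μ/(b:ℝ) := by field_simp
    rw [hρdef]
    rw [h4] at h3
    linarith
  -- real part of the boundary-boundary conductance
  have hcSre : ∀ i j, i ≠ j → (-Λ i j - ((γ:ℝ):ℂ)⁻¹ * ∑ k, d k i * d k j).re = ρ := by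
    intro i j hij
    have hz : (∑ k, d k i * d k j).re = ((b-2:ℕ):ℝ)*(δ*δ) - γ*(R i j + μ/b) := by
      rw [Complex.re_sum]
      rw [Finset.sum_congr rfl fun k _ => hprodre k i j]
      rw [Finset.sum_sub_distrib, Finset.sum_const, ← Finset.mul_sum, hwprod i j hij]
      simp [nsmul_eq_mul]
      exact Or.inl hγdef
    rw [Complex.sub_re, Complex.neg_re, ← Complex.ofReal_inv, Complex.re_ofReal_mul, hz]
    have hRΛ : R i j = (Λ i j).re := rfl
    rw [hρdef, ← hRΛ]
    field_simp
    ring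
  -- boundary-boundary conductances
  set cS : Fin b → Fin b → ℂ := fun i j => -Λ i j - ((γ:ℝ):ℂ)⁻¹ * ∑ k, d k i * d k j
    with hcSdef
  have hcSre' : ∀ i j, i ≠ j → (cS i j).re = ρ := fun i j hij => hcSre i j hij
  have hcSne : ∀ i j, i ≠ j → cS i j ≠ 0 := by
    intro i j hij h
    have := hcSre' i j hij
    rw [h] at this
    simp only [Complex.zero_re] at this
    exact hρpos.ne this
  have hcSsym : ∀ i j, cS i j = cS j i := by
    intro i j
    rw [hcSdef]
    simp only
    rw [hΛsym i j]
    congr 2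
    exact Finset.sum_congr rfl fun k _ => mul_comm _ _
  -- the conductance function
  set cc : (Fin b ⊕ Fin (b-2)) → (Fin b ⊕ Fin (b-2)) → ℂ := fun u =>
    Sum.elim (fun i => Sum.elim (fun j => if i = j then 0 else cS i j) (fun k => d k i))
      (fun k => Sum.elim (fun i => d k i) (fun _ => 0)) u with hccdef
  have hccll : ∀ i j, cc (Sum.inl i) (Sum.inl j) = if i = j then 0 else cS i j := fun _ _ => rfl
  have hcclr : ∀ i k, cc (Sum.inl i) (Sum.inr k) = d k i := fun _ _ => rfl
  have hccrl : ∀ k i, cc (Sum.inr k) (Sum.inl i) = d k i := fun _ _ => rfl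
  have hccrr : ∀ k k', cc (Sum.inr k) (Sum.inr k') = 0 := fun _ _ => rfl
  have o : Fin b := ⟨0, by omega⟩
  refine ⟨b - 2, le_rfl, cc, ?_, ?_, ?_, ?_,
    Matrix.of (fun i j =>
      if (Sum.inl i : Fin b ⊕ Fin (b-2)) = Sum.inl j then ∑ w, cc (Sum.inl i) w
      else -cc (Sum.inl i) (Sum.inl j)),
    Matrix.of (fun i j => -cc (Sum.inl i) (Sum.inr j)),
    Matrix.of (fun i j =>
      if (Sum.inr i : Fin b ⊕ Fin (b-2)) = Sum.inr j then ∑ w, cc (Sum.inr i) w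
      else -cc (Sum.inr i) (Sum.inr j)), rfl, rfl, rfl, ?_, ?_⟩
  · -- symmetry
    rintro (i | k) (j | k')
    · rw [hccll, hccll]
      rcases eq_or_ne i j with h | h
      · rw [h]
      · rw [if_neg h, if_neg (Ne.symm h), hcSsym]
    · rw [hcclr, hccrl]
    · rw [hccrl, hcclr]
    · rw [hccrr, hccrr]
  · -- zero diagonal
    rintro (i | k)
    · rw [hccll, if_pos rfl]
    · rw [hccrr]
  · -- positive real part
    rintro (i | k) (j | k') h
    · rw [hccll] at h ⊢
      rcases eq_or_ne i j with he | he
      · exact absurd (if_pos he) h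
      · rw [if_neg he] at h ⊢
        rw [hcSre' i j he]
        exact hρpos
    · rw [hcclr] at h ⊢
      rw [hdre]
      exact hδpos
    · rw [hccrl] at h ⊢
      rw [hdre]
      exact hδpos
    · exact absurd (hccrr k k') h
  · -- connectivity
    have hkey : ∀ u, u ≠ Sum.inl o →
        (SimpleGraph.fromRel fun u v => cc u v ≠ 0).Adj u (Sum.inl o) := by
      rintro (i | k) h
      · have hio : i ≠ o := fun he => h (by rw [he])
        rw [SimpleGraph.fromRel_adj]
        refine ⟨h, Or.inl ?_⟩
        rw [hccll, if_neg hio]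
        exact hcSne i o hio
      · rw [SimpleGraph.fromRel_adj]
        refine ⟨h, Or.inl ?_⟩
        rw [hccrl]
        exact hdne k o
    have hreach : ∀ u, (SimpleGraph.fromRel fun u v => cc u v ≠ 0).Reachable u (Sum.inl o) := by
      intro u
      rcases eq_or_ne u (Sum.inl o) with h | h
      · rw [h]
      · exact (hkey u h).reachable
    have : Nonempty (Fin b ⊕ Fin (b-2)) := ⟨Sum.inl o⟩
    exact ⟨fun u v => (hreach u).trans (hreach v).symm⟩
  · -- IsUnit C
    have hCeq : (Matrix.of (fun i j =>
        if (Sum.inr i : Fin b ⊕ Fin (b-2)) = Sum.inr j then ∑ w, cc (Sum.inr i) w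
        else -cc (Sum.inr i) (Sum.inr j)) : Matrix (Fin (b-2)) (Fin (b-2)) ℂ)
        = Matrix.diagonal (fun _ => ((γ:ℝ):ℂ)) := by
      ext k k'
      rcases eq_or_ne k k' with h | h
      · subst h
        simp only [Matrix.of_apply, if_pos rfl, Matrix.diagonal_apply_eq]
        rw [Fintype.sum_sum_type]
        simp only [hcclr, hccrl, hccrr]
        rw [Finset.sum_const, smul_zero, add_zero]
        exact hdsum k
      · simp only [Matrix.of_apply, Matrix.diagonal_apply_ne _ h, Sum.inr.injEq, if_neg h,
          hccrr, neg_zero]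
    rw [hCeq]
    rw [Matrix.isUnit_iff_isUnit_det, Matrix.det_diagonal, Finset.prod_const]
    exact (pow_ne_zero _ hγC).isUnit
  · -- the Schur complement identity
    have hCinv : (Matrix.of (fun i j =>
        if (Sum.inr i : Fin b ⊕ Fin (b-2)) = Sum.inr j then ∑ w, cc (Sum.inr i) w
        else -cc (Sum.inr i) (Sum.inr j)) : Matrix (Fin (b-2)) (Fin (b-2)) ℂ)⁻¹
        = Matrix.diagonal (fun _ => ((γ:ℝ):ℂ)⁻¹) := by
      have hCeq : (Matrix.of (fun i j =>
          if (Sum.inr i : Fin b ⊕ Fin (b-2)) = Sum.inr j then ∑ w, cc (Sum.inr i) w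
          else -cc (Sum.inr i) (Sum.inr j)) : Matrix (Fin (b-2)) (Fin (b-2)) ℂ)
          = Matrix.diagonal (fun _ => ((γ:ℝ):ℂ)) := by
        ext k k'
        rcases eq_or_ne k k' with h | h
        · subst h
          simp only [Matrix.of_apply, if_pos rfl, Matrix.diagonal_apply_eq]
          rw [Fintype.sum_sum_type]
          simp only [hcclr, hccrl, hccrr]
          rw [Finset.sum_const, smul_zero, add_zero]
          exact hdsum k
        · simp only [Matrix.of_apply, Matrix.diagonal_apply_ne _ h, Sum.inr.injEq, if_neg h,
            hccrr, neg_zero]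
      apply Matrix.inv_eq_right_inv
      rw [hCeq, Matrix.diagonal_mul_diagonal]
      convert Matrix.diagonal_one
      simp [mul_inv_cancel₀ hγC]
    rw [hCinv]
    set Bm : Matrix (Fin b) (Fin (b-2)) ℂ := Matrix.of (fun i j => -cc (Sum.inl i) (Sum.inr j))
      with hBm
    have hBCB : ∀ i j, (Bm * Matrix.diagonal (fun _ : Fin (b-2) => ((γ:ℝ):ℂ)⁻¹) * Bmᵀ) i j
        = ((γ:ℝ):ℂ)⁻¹ * ∑ k, d k i * d k j := by
      intro i j
      rw [Matrix.mul_apply, Finset.mul_sum]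
      refine Finset.sum_congr rfl fun k _ => ?_
      rw [Matrix.mul_diagonal, Matrix.transpose_apply]
      simp only [hBm, Matrix.of_apply, hcclr]
      ring
    have hinv : ((γ:ℝ):ℂ)⁻¹ * ((γ:ℝ):ℂ) = 1 := inv_mul_cancel₀ hγC
    ext i j
    rw [Matrix.sub_apply, hBCB i j, Matrix.of_apply]
    rcases eq_or_ne i j with h | h
    · subst h
      rw [if_pos rfl, Fintype.sum_sum_type]
      simp only [hccll, hcclr]
      have h1 : ∑ j', (if i = j' then 0 else cS i j')
          = ∑ j' ∈ Finset.univ.erase i, cS i j' := by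
        rw [← Finset.add_sum_erase _ _ (Finset.mem_univ i), if_pos rfl, zero_add]
        exact Finset.sum_congr rfl fun j' hj' =>
          if_neg (Ne.symm (Finset.mem_erase.mp hj').1)
      have h2 : ∑ j' ∈ Finset.univ.erase i, (-Λ i j') = Λ i i := by
        have hh := hΛrow i
        rw [← Finset.add_sum_erase _ _ (Finset.mem_univ i)] at hh
        rw [Finset.sum_neg_distrib]
        linear_combination -hh
      have h3 : ∀ k, ∑ j' ∈ Finset.univ.erase i, d k j' = ((γ:ℝ):ℂ) - d k i := by
        intro k
        have hh := hdsum k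
        rw [← Finset.add_sum_erase _ _ (Finset.mem_univ i)] at hh
        linear_combination hh
      have h4 : ∑ j' ∈ Finset.univ.erase i, cS i j'
          = Λ i i - ((γ:ℝ):ℂ)⁻¹ * ∑ k, d k i * (((γ:ℝ):ℂ) - d k i) := by
        have hcS' : ∀ j', cS i j' = -Λ i j' - ((γ:ℝ):ℂ)⁻¹ * ∑ k, d k i * d k j' :=
          fun j' => rfl
        rw [Finset.sum_congr rfl fun j' _ => hcS' j', Finset.sum_sub_distrib, h2,
          ← Finset.mul_sum]
        congr 2
        rw [Finset.sum_comm]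
        refine Finset.sum_congr rfl fun k _ => ?_
        rw [← Finset.mul_sum, h3 k]
      rw [h1, h4]
      have hexp : ((γ:ℝ):ℂ)⁻¹ * ∑ k, d k i * (((γ:ℝ):ℂ) - d k i)
          = ∑ k, d k i - ((γ:ℝ):ℂ)⁻¹ * ∑ k, d k i * d k i := by
        rw [Finset.mul_sum]
        rw [Finset.sum_congr rfl (fun k _ => by linear_combination (d k i) * hinv :
          ∀ k ∈ Finset.univ, ((γ:ℝ):ℂ)⁻¹ * (d k i * (((γ:ℝ):ℂ) - d k i))
            = d k i - ((γ:ℝ):ℂ)⁻¹ * (d k i * d k i))]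
        rw [Finset.sum_sub_distrib, ← Finset.mul_sum]
      rw [hexp]
      ring
    · rw [if_neg (show ¬(Sum.inl i : Fin b ⊕ Fin (b-2)) = Sum.inl j by simp [h]),
        hccll, if_neg h]
      have hcS' : cS i j = -Λ i j - ((γ:ℝ):ℂ)⁻¹ * ∑ k, d k i * d k j := rfl
      rw [hcS']
      ring
end
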